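/- arXiv:1905.13558 — 3 statements merged into one kernel-verified Lean document; each statement's English description precedes it below -/
import Mathlib

section
/- For every positive integer n, the number of subgroups of index n in π₁(G₃) that are isomorphic to ℤ³ equals ω(n/3), which is 0 when 3 does not divide n. -/
open scoped Classical

noncomputable section

/-- `θ(n)`: number of pairs `(p,q)` with `p > 0`, `q ≥ 0`, `p² − pq + q² = n`. -/
def theta (n : ℕ) : ℕ :=
  Nat.card {pq : ℤ × ℤ // 0 < pq.1 ∧ 0 ≤ pq.2 ∧ pq.1 ^ 2 - pq.1 * pq.2 + pq.2 ^ 2 = (n : ℤ)}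

/-- `σ₁(n)`: sum of positive divisors of `n`. -/
def sigma1 (n : ℕ) : ℕ := ∑ d ∈ n.divisors, d

/-- `σ₂(n) = Σ_{k ∣ n} σ₁(k)`. -/
def sigma2 (n : ℕ) : ℕ := ∑ k ∈ n.divisors, sigma1 k

/-- `ω(n) = Σ_{k ∣ n} k·σ₁(k)`. -/
def omegaFn (n : ℕ) : ℕ := ∑ k ∈ n.divisors, k * sigma1 k

/-- The order-3 automorphism `ℓ : (x,y) ↦ (−y, x−y)` of `ℤ²`. -/
def ellG3 : (ℤ × ℤ) ≃+ (ℤ × ℤ) where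
  toFun p := (-p.2, p.1 - p.2)
  invFun p := (p.2 - p.1, -p.1)
  left_inv p := by simp [Prod.ext_iff]
  right_inv p := by simp [Prod.ext_iff]
  map_add' p q := by simp [Prod.ext_iff]; constructor <;> ring

/-- The order-6 automorphism `(x,y) ↦ (x−y, x)` of `ℤ²`. -/
def ellG5 : (ℤ × ℤ) ≃+ (ℤ × ℤ) where
  toFun p := (p.1 - p.2, p.1)
  invFun p := (p.2, p.2 - p.1)
  left_inv p := by simp [Prod.ext_iff]
  right_inv p := by simp [Prod.ext_iff]
  map_add' p q := by simp [Prod.ext_iff]; ring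

/-- The order-2 automorphism `(x,y) ↦ (−x, −y)` of `ℤ²`. -/
def ellG2 : (ℤ × ℤ) ≃+ (ℤ × ℤ) where
  toFun p := (-p.1, -p.2)
  invFun p := (-p.1, -p.2)
  left_inv p := by simp [Prod.ext_iff]
  right_inv p := by simp [Prod.ext_iff]
  map_add' p q := by simp [Prod.ext_iff]; constructor <;> ring

/-- The action of `ℤ` on `ℤ²` generated by `ℓ = ellG3`. -/
def phiG3 : Multiplicative ℤ →* MulAut (Multiplicative (ℤ × ℤ)) :=
  zpowersHom _ (AddEquiv.toMultiplicative ellG3)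

def phiG5 : Multiplicative ℤ →* MulAut (Multiplicative (ℤ × ℤ)) :=
  zpowersHom _ (AddEquiv.toMultiplicative ellG5)

def phiG2 : Multiplicative ℤ →* MulAut (Multiplicative (ℤ × ℤ)) :=
  zpowersHom _ (AddEquiv.toMultiplicative ellG2)

/-- `π₁(G₃) = ℤ² ⋊ ℤ`, the generator of `ℤ` acting by `ℓ : (x,y) ↦ (−y, x−y)`. -/
abbrev PiG3 : Type := Multiplicative (ℤ × ℤ) ⋊[phiG3] Multiplicative ℤ

/-- `π₁(G₅) = ℤ² ⋊ ℤ`, the generator of `ℤ` acting by `(x,y) ↦ (x−y, x)`. -/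
abbrev PiG5 : Type := Multiplicative (ℤ × ℤ) ⋊[phiG5] Multiplicative ℤ

/-- `π₁(G₂) = ℤ² ⋊ ℤ`, the generator of `ℤ` acting by `(x,y) ↦ (−x, −y)`. -/
abbrev PiG2 : Type := Multiplicative (ℤ × ℤ) ⋊[phiG2] Multiplicative ℤ

/-- `ℤ³`, written multiplicatively. -/
abbrev Z3 : Type := Multiplicative (ℤ × ℤ × ℤ)

/-- The number of conjugacy classes of subgroups of `G` satisfying a property `P`
(invariant under conjugation). -/
def numConjClasses (G : Type*) [Group G] (P : Subgroup G → Prop) : ℕ :=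
  Nat.card (Quot (fun H K : {H : Subgroup G // P H} =>
    ∃ g : G, Subgroup.map (MulAut.conj g).toMonoidHom H.val = K.val))

lemma ellG3_cube (p : ℤ × ℤ) : ellG3 (ellG3 (ellG3 p)) = p := by
  simp [ellG3, Prod.ext_iff]; ring

lemma toMult_pow3 : (AddEquiv.toMultiplicative ellG3) ^ (3:ℤ) = 1 := by
  have h3 : ((3:ℤ)) = ((3:ℕ):ℤ) := rfl
  ext1 p
  rw [h3, zpow_natCast, pow_succ, pow_succ, pow_one, MulAut.mul_apply, MulAut.mul_apply]
  show Multiplicative.ofAdd (ellG3 (ellG3 (ellG3 (Multiplicative.toAdd p)))) = p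
  rw [ellG3_cube]; rfl

lemma phiG3_triv (r : ℤ) (h : (3:ℤ) ∣ r) (x : Multiplicative (ℤ × ℤ)) :
    phiG3 (Multiplicative.ofAdd r) x = x := by
  obtain ⟨k, rfl⟩ := h
  rw [phiG3, zpowersHom_apply, toAdd_ofAdd, zpow_mul, toMult_pow3, one_zpow]
  rfl

-- Now element arithmetic in PiG3.
-- mk an element
def mk3 (x y r : ℤ) : PiG3 := ⟨Multiplicative.ofAdd (x, y), Multiplicative.ofAdd r⟩

lemma mk3_mul (x y r x' y' r' : ℤ) (h : (3:ℤ) ∣ r) :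
    mk3 x y r * mk3 x' y' r' = mk3 (x + x') (y + y') (r + r') := by
  show (⟨_ * phiG3 _ _, _⟩ : PiG3) = _
  rw [show (mk3 x y r).right = Multiplicative.ofAdd r from rfl, phiG3_triv _ h]
  rfl

lemma mk3_surj (g : PiG3) : ∃ x y r : ℤ, g = mk3 x y r := by
  exact ⟨(Multiplicative.toAdd g.left).1, (Multiplicative.toAdd g.left).2, Multiplicative.toAdd g.right, rfl⟩

lemma mk3_inj {x y r x' y' r' : ℤ} (h : mk3 x y r = mk3 x' y' r') : x = x' ∧ y = y' ∧ r = r' := by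
  have h1 := congrArg (fun g : PiG3 => Multiplicative.toAdd g.left) h
  have h2 := congrArg (fun g : PiG3 => Multiplicative.toAdd g.right) h
  simp [mk3] at h1 h2
  exact ⟨h1.1, h1.2, h2⟩

lemma mk3_one : mk3 0 0 0 = 1 := rfl

lemma mk3_congr {x y r x' y' r' : ℤ} (hx : x = x') (hy : y = y') (hr : r = r') :
    mk3 x y r = mk3 x' y' r' := by subst hx; subst hy; subst hr; rfl

lemma mk3_inv (x y r : ℤ) (h : (3:ℤ) ∣ r) : (mk3 x y r)⁻¹ = mk3 (-x) (-y) (-r) := by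
  have : mk3 (-x) (-y) (-r) * mk3 x y r = 1 := by
    rw [mk3_mul _ _ _ _ _ _ (dvd_neg.mpr h)]; simp [mk3_one]
  exact inv_eq_of_mul_eq_one_left this

lemma mk3_zpow (x y r : ℤ) (h : (3:ℤ) ∣ r) (q : ℤ) :
    (mk3 x y r) ^ q = mk3 (q*x) (q*y) (q*r) := by
  induction q using Int.induction_on with
  | zero => simp [mk3_one]
  | succ k ih =>
      rw [zpow_add, zpow_one, ih, mk3_mul _ _ _ _ _ _ (Dvd.dvd.mul_left h k)]
      ring_nf
  | pred k ih =>
      rw [sub_eq_add_neg, zpow_add, ih, zpow_neg, zpow_one,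
        mk3_inv _ _ _ h, mk3_mul _ _ _ _ _ _ (Dvd.dvd.mul_left h (-k))]
      ring_nf

/-- The homomorphism `ℤ³ → PiG3` with image the subgroup of parameters `(m,a,d,b,v₁,v₂)`. -/
def psi (m a d b v₁ v₂ : ℤ) (hm : (3:ℤ) ∣ m) : Z3 →* PiG3 where
  toFun w :=
    mk3 ((Multiplicative.toAdd w).1 * v₁ + (Multiplicative.toAdd w).2.1 * a)
        ((Multiplicative.toAdd w).1 * v₂ + (Multiplicative.toAdd w).2.1 * b + (Multiplicative.toAdd w).2.2 * d)
        ((Multiplicative.toAdd w).1 * m)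
  map_one' := by
    show mk3 _ _ _ = 1
    rw [← mk3_one]
    norm_num
  map_mul' w w' := by
    rw [mk3_mul _ _ _ _ _ _ (Dvd.dvd.mul_left hm _)]
    show mk3 _ _ _ = _
    have h1 : Multiplicative.toAdd (w * w') = Multiplicative.toAdd w + Multiplicative.toAdd w' := rfl
    rw [h1]
    simp only [Prod.fst_add, Prod.snd_add]
    exact mk3_congr (by ring) (by ring) (by ring)

def Hsub (m a d b v₁ v₂ : ℤ) (hm : (3:ℤ) ∣ m) : Subgroup PiG3 := (psi m a d b v₁ v₂ hm).range

lemma mem_Hsub {m a d b v₁ v₂ : ℤ} {hm : (3:ℤ) ∣ m} {g : PiG3} :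
    g ∈ Hsub m a d b v₁ v₂ hm ↔ ∃ q s u : ℤ, g = mk3 (q*v₁ + s*a) (q*v₂ + s*b + u*d) (q*m) := by
  constructor
  · rintro ⟨w, rfl⟩
    exact ⟨(Multiplicative.toAdd w).1, (Multiplicative.toAdd w).2.1, (Multiplicative.toAdd w).2.2, rfl⟩
  · rintro ⟨q, s, u, rfl⟩
    exact ⟨Multiplicative.ofAdd (q, s, u), rfl⟩

lemma psi_injective {m a d b v₁ v₂ : ℤ} (hm : (3:ℤ) ∣ m) (hm0 : 0 < m) (ha : 0 < a) (hd : 0 < d) :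
    Function.Injective (psi m a d b v₁ v₂ hm) := by
  have key : ∀ w : Z3, psi m a d b v₁ v₂ hm w = 1 → w = 1 := by
    intro w hw
    have h1 : mk3 _ _ _ = mk3 0 0 0 := hw.trans mk3_one.symm
    obtain ⟨h2, h3, h4⟩ := mk3_inj h1
    have hq : (Multiplicative.toAdd w).1 = 0 := by
      rcases mul_eq_zero.mp h4 with h | h
      · exact h
      · omega
    have hs : (Multiplicative.toAdd w).2.1 = 0 := by
      rw [hq] at h2; simp at h2
      rcases h2 with h | h
      · exact h
      · omega
    have hu : (Multiplicative.toAdd w).2.2 = 0 := by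
      rw [hq, hs] at h3; simp at h3
      rcases h3 with h | h
      · exact h
      · omega
    have : Multiplicative.toAdd w = 0 := Prod.ext hq (Prod.ext hs hu)
    simpa using congrArg Multiplicative.ofAdd this
  intro w w' h
  have := key (w * w'⁻¹) (by rw [map_mul, h, map_inv, mul_inv_cancel])
  have h2 : w * w'⁻¹ * w' = w' := by rw [this, one_mul]
  rw [inv_mul_cancel_right] at h2
  exact h2

lemma Hsub_iso_Z3 {m a d b v₁ v₂ : ℤ} (hm : (3:ℤ) ∣ m) (hm0 : 0 < m) (ha : 0 < a) (hd : 0 < d) :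
    Nonempty ((Hsub m a d b v₁ v₂ hm) ≃* Z3) :=
  ⟨(MonoidHom.ofInjective (psi_injective hm hm0 ha hd)).symm⟩

section Index

variable (m a d b v₁ v₂ : ℤ) (hm : (3:ℤ) ∣ m) (hm0 : 0 < m) (ha : 0 < a) (hd : 0 < d)

def Xc (g : PiG3) : ℤ := (Multiplicative.toAdd g.left).1
def Yc (g : PiG3) : ℤ := (Multiplicative.toAdd g.left).2
def Rc (g : PiG3) : ℤ := Multiplicative.toAdd g.right

lemma mk3_Xc (g : PiG3) : g = mk3 (Xc g) (Yc g) (Rc g) := rfl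
@[simp] lemma Xc_mk3 (x y r : ℤ) : Xc (mk3 x y r) = x := rfl
@[simp] lemma Yc_mk3 (x y r : ℤ) : Yc (mk3 x y r) = y := rfl
@[simp] lemma Rc_mk3 (x y r : ℤ) : Rc (mk3 x y r) = r := rfl

/-- Coset invariant for `Hsub`. -/
def fcos (g : PiG3) : ZMod m.toNat × ZMod a.toNat × ZMod d.toNat :=
  ((Rc g : ZMod m.toNat),
   ((Xc g - (Rc g)/m * v₁ : ℤ) : ZMod a.toNat),
   ((Yc g - (Rc g)/m * v₂ - ((Xc g - (Rc g)/m * v₁)/a) * b : ℤ) : ZMod d.toNat))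

include hm0 ha hd in
lemma fcos_mul (h g : PiG3) (hh : h ∈ Hsub m a d b v₁ v₂ hm) :
    fcos m a d b v₁ v₂ (h * g) = fcos m a d b v₁ v₂ g := by
  rw [mem_Hsub] at hh
  obtain ⟨q, s, u, rfl⟩ := hh
  obtain ⟨x, y, r, rfl⟩ := mk3_surj g
  rw [mk3_mul _ _ _ _ _ _ (Dvd.dvd.mul_left hm q)]
  have hdiv : (q*m + r)/m = r/m + q := by
    rw [add_comm, Int.add_mul_ediv_right _ _ hm0.ne']
  have e2 : (q*v₁ + s*a + x) - ((q*m+r)/m)*v₁ = (x - (r/m)*v₁) + s*a := by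
    rw [hdiv]; ring
  have e3 : ((x - (r/m)*v₁) + s*a)/a = (x - (r/m)*v₁)/a + s :=
    Int.add_mul_ediv_right _ _ ha.ne'
  have e4 : (q*v₂ + s*b + u*d + y) - ((q*m+r)/m)*v₂ - (((q*v₁+s*a+x) - ((q*m+r)/m)*v₁)/a)*b
      = (y - (r/m)*v₂ - ((x - (r/m)*v₁)/a)*b) + u*d := by
    rw [e2, e3, hdiv]; ring
  have hmM : ((m : ℤ) : ZMod m.toNat) = 0 := by
    rw [ZMod.intCast_zmod_eq_zero_iff_dvd, show ((m.toNat:ℕ):ℤ) = m by omega]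
  have haA : ((a : ℤ) : ZMod a.toNat) = 0 := by
    rw [ZMod.intCast_zmod_eq_zero_iff_dvd, show ((a.toNat:ℕ):ℤ) = a by omega]
  have hdD : ((d : ℤ) : ZMod d.toNat) = 0 := by
    rw [ZMod.intCast_zmod_eq_zero_iff_dvd, show ((d.toNat:ℕ):ℤ) = d by omega]
  unfold fcos
  simp only [Xc_mk3, Yc_mk3, Rc_mk3]
  refine Prod.ext ?_ (Prod.ext ?_ ?_)
  · push_cast
    rw [hmM]; ring
  · rw [e2]; push_cast; rw [haA]; ring
  · rw [e4]; push_cast; rw [hdD]; ring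

include hm0 ha hd in
lemma fcos_rel (g g' : PiG3) (hf : fcos m a d b v₁ v₂ g = fcos m a d b v₁ v₂ g') :
    g' * g⁻¹ ∈ Hsub m a d b v₁ v₂ hm := by
  obtain ⟨x, y, r, rfl⟩ := mk3_surj g
  obtain ⟨x', y', r', rfl⟩ := mk3_surj g'
  unfold fcos at hf
  simp only [Xc_mk3, Yc_mk3, Rc_mk3, Prod.ext_iff] at hf
  obtain ⟨h1, h2, h3⟩ := hf
  have d1 : m ∣ r' - r := by
    have := (ZMod.intCast_eq_intCast_iff _ _ _).mp h1
    have h4 := Int.ModEq.dvd this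
    have : ((m.toNat : ℕ) : ℤ) = m := by omega
    rwa [this] at h4
  have d2 : a ∣ (x' - (r'/m)*v₁) - (x - (r/m)*v₁) := by
    have := (ZMod.intCast_eq_intCast_iff _ _ _).mp h2
    have h4 := Int.ModEq.dvd this
    have : ((a.toNat : ℕ) : ℤ) = a := by omega
    rwa [this] at h4
  have d3 : d ∣ (y' - (r'/m)*v₂ - ((x' - (r'/m)*v₁)/a)*b) - (y - (r/m)*v₂ - ((x - (r/m)*v₁)/a)*b) := by
    have := (ZMod.intCast_eq_intCast_iff _ _ _).mp h3
    have h4 := Int.ModEq.dvd this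
    have : ((d.toNat : ℕ) : ℤ) = d := by omega
    rwa [this] at h4
  set q := (r' - r)/m with hq
  set s := ((x' - (r'/m)*v₁) - (x - (r/m)*v₁))/a with hs
  set u := ((y' - (r'/m)*v₂ - ((x' - (r'/m)*v₁)/a)*b) - (y - (r/m)*v₂ - ((x - (r/m)*v₁)/a)*b))/d with hu
  have hqm : q * m = r' - r := Int.ediv_mul_cancel d1
  have hsa : s * a = (x' - (r'/m)*v₁) - (x - (r/m)*v₁) := Int.ediv_mul_cancel d2
  have hud : u * d = (y' - (r'/m)*v₂ - ((x' - (r'/m)*v₁)/a)*b) - (y - (r/m)*v₂ - ((x - (r/m)*v₁)/a)*b) :=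
    Int.ediv_mul_cancel d3
  have hr' : r' = r + q*m := by linarith
  have hdiv : r'/m = r/m + q := by
    rw [hr', Int.add_mul_ediv_right _ _ hm0.ne']
  have hx' : x' = q*v₁ + s*a + x := by
    rw [hdiv] at hsa; linarith
  have hsdiv : (x' - (r'/m)*v₁)/a = (x - (r/m)*v₁)/a + s := by
    have : x' - (r'/m)*v₁ = (x - (r/m)*v₁) + s*a := by rw [hdiv] at hsa ⊢; linarith
    rw [this, Int.add_mul_ediv_right _ _ ha.ne']
  have hy' : y' = q*v₂ + s*b + u*d + y := by
    rw [hsdiv, hdiv] at hud; linarith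
  have key : mk3 (q*v₁+s*a) (q*v₂+s*b+u*d) (q*m) * mk3 x y r = mk3 x' y' r' := by
    rw [mk3_mul _ _ _ _ _ _ (Dvd.dvd.mul_left hm q)]
    exact mk3_congr (by linarith) (by linarith) (by linarith)
  rw [← key, mul_inv_cancel_right]
  rw [mem_Hsub]
  exact ⟨q, s, u, rfl⟩

include hm0 ha hd in
lemma fcos_surj : Function.Surjective (fcos m a d b v₁ v₂) := by
  rintro ⟨c1, c2, c3⟩
  haveI : NeZero m.toNat := ⟨by omega⟩
  haveI : NeZero a.toNat := ⟨by omega⟩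
  haveI : NeZero d.toNat := ⟨by omega⟩
  refine ⟨mk3 (c2.val : ℤ) (c3.val : ℤ) (c1.val : ℤ), ?_⟩
  have hr : ((c1.val : ℤ))/m = 0 := by
    apply Int.ediv_eq_zero_of_lt (by positivity)
    have := ZMod.val_lt c1; omega
  have hx : ((c2.val : ℤ) - 0*v₁)/a = 0 := by
    apply Int.ediv_eq_zero_of_lt (by push_cast; omega)
    have := ZMod.val_lt c2; push_cast; omega
  unfold fcos
  simp only [Xc_mk3, Yc_mk3, Rc_mk3, hr, hx]
  refine Prod.ext ?_ (Prod.ext ?_ ?_)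
  · push_cast; simp [ZMod.natCast_val, ZMod.cast_id]
  · push_cast; simp [ZMod.natCast_val, ZMod.cast_id]
  · push_cast; simp [ZMod.natCast_val, ZMod.cast_id]

include hm0 ha hd in
lemma Hsub_index : (Hsub m a d b v₁ v₂ hm).index = m.toNat * (a.toNat * d.toNat) := by
  have e1 : Quotient (QuotientGroup.rightRel (Hsub m a d b v₁ v₂ hm)) ≃
      ZMod m.toNat × ZMod a.toNat × ZMod d.toNat := by
    refine Equiv.ofBijective (Quotient.lift (fcos m a d b v₁ v₂) ?_) ⟨?_, ?_⟩
    · intro g g' hrel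
      replace hrel := QuotientGroup.rightRel_apply.mp hrel
      have : g' = (g' * g⁻¹) * g := by rw [inv_mul_cancel_right]
      rw [this, fcos_mul m a d b v₁ v₂ hm hm0 ha hd _ _ hrel]
    · rintro ⟨g⟩ ⟨g'⟩ hf
      exact Quotient.sound ((QuotientGroup.rightRel_apply).mpr
        (fcos_rel m a d b v₁ v₂ hm hm0 ha hd g g' hf))
    · rintro c
      obtain ⟨g, hg⟩ := fcos_surj m a d b v₁ v₂ hm0 ha hd c
      exact ⟨Quotient.mk'' g, hg⟩
  have e2 : (PiG3 ⧸ (Hsub m a d b v₁ v₂ hm)) ≃ ZMod m.toNat × ZMod a.toNat × ZMod d.toNat :=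
    (QuotientGroup.quotientRightRelEquivQuotientLeftRel _).symm.trans e1
  rw [Subgroup.index, Nat.card_congr e2, Nat.card_prod, Nat.card_prod,
    Nat.card_zmod, Nat.card_zmod, Nat.card_zmod]

end Index

section Inj

lemma bounded_aux {c c' e u : ℤ} (h : c = c' + u * e) (h1 : 0 ≤ c) (h2 : c < e)
    (h3 : 0 ≤ c') (h4 : c' < e) : c = c' ∧ u = 0 := by
  rcases lt_trichotomy u 0 with hu | hu | hu
  · have : u * e ≤ -1 * e := mul_le_mul_of_nonneg_right (by omega) (by omega)
    constructor <;> linarith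
  · subst hu; rw [zero_mul, add_zero] at h; exact ⟨h, rfl⟩
  · have : 1 * e ≤ u * e := mul_le_mul_of_nonneg_right (by omega) (by omega)
    constructor <;> linarith

lemma pos_mul_eq {a a' s t : ℤ} (ha : 0 < a) (ha' : 0 < a') (h1 : a = s * a') (h2 : a' = t * a) :
    a = a' ∧ s = 1 := by
  have hst : (s * t) * a = 1 * a := by
    rw [one_mul]
    calc s*t*a = s*(t*a) := by ring
    _ = s * a' := by rw [← h2]
    _ = a := h1.symm
  have h3 : s * t = 1 := mul_right_cancel₀ (by omega) hst
  have hs : 0 < s := by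
    rcases le_or_gt s 0 with h | h
    · have : s * a' ≤ 0 := mul_nonpos_of_nonpos_of_nonneg h (by omega)
      omega
    · exact h
  have : s = 1 ∨ s = -1 := Int.isUnit_iff.mp (IsUnit.of_mul_eq_one _ h3)
  have hs1 : s = 1 := by omega
  refine ⟨?_, hs1⟩
  rw [hs1, one_mul] at h1; omega

lemma mem_Hsub_inj {m a d b v₁ v₂ : ℤ} {hm : (3:ℤ) ∣ m} {X Y R : ℤ}
    (h : mk3 X Y R ∈ Hsub m a d b v₁ v₂ hm) :
    ∃ q s u : ℤ, X = q*v₁ + s*a ∧ Y = q*v₂ + s*b + u*d ∧ R = q*m := by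
  rw [mem_Hsub] at h
  obtain ⟨q, s, u, h⟩ := h
  obtain ⟨h1, h2, h3⟩ := mk3_inj h
  exact ⟨q, s, u, h1, h2, h3⟩

lemma e1_mem {m a d b v₁ v₂ : ℤ} (hm : (3:ℤ) ∣ m) : mk3 v₁ v₂ m ∈ Hsub m a d b v₁ v₂ hm := by
  rw [mem_Hsub]; exact ⟨1, 0, 0, mk3_congr (by ring) (by ring) (by ring)⟩

lemma e2_mem {m a d b v₁ v₂ : ℤ} (hm : (3:ℤ) ∣ m) : mk3 a b 0 ∈ Hsub m a d b v₁ v₂ hm := by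
  rw [mem_Hsub]; exact ⟨0, 1, 0, mk3_congr (by ring) (by ring) (by ring)⟩

lemma e3_mem {m a d b v₁ v₂ : ℤ} (hm : (3:ℤ) ∣ m) : mk3 0 d 0 ∈ Hsub m a d b v₁ v₂ hm := by
  rw [mem_Hsub]; exact ⟨0, 0, 1, mk3_congr (by ring) (by ring) (by ring)⟩

lemma Hsub_param_inj {m a d b v₁ v₂ m' a' d' b' v₁' v₂' : ℤ}
    (hm : (3:ℤ) ∣ m) (hm' : (3:ℤ) ∣ m')
    (hm0 : 0 < m) (ha : 0 < a) (hd : 0 < d)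
    (hm0' : 0 < m') (ha' : 0 < a') (hd' : 0 < d')
    (hb : 0 ≤ b) (hbd : b < d) (hv1 : 0 ≤ v₁) (hv1a : v₁ < a) (hv2 : 0 ≤ v₂) (hv2d : v₂ < d)
    (hb' : 0 ≤ b') (hbd' : b' < d') (hv1' : 0 ≤ v₁') (hv1a' : v₁' < a') (hv2' : 0 ≤ v₂')
    (hv2d' : v₂' < d')
    (heq : Hsub m a d b v₁ v₂ hm = Hsub m' a' d' b' v₁' v₂' hm') :
    m = m' ∧ a = a' ∧ d = d' ∧ b = b' ∧ v₁ = v₁' ∧ v₂ = v₂' := by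
  -- m = m'
  obtain ⟨q1, s1, u1, hA1, hB1, hC1⟩ := mem_Hsub_inj (heq ▸ e1_mem (v₁ := v₁) (v₂ := v₂) (a := a) (d := d) (b := b) hm)
  obtain ⟨q2, s2, u2, hA2, hB2, hC2⟩ := mem_Hsub_inj (heq.symm ▸ e1_mem (v₁ := v₁') (v₂ := v₂') (a := a') (d := d') (b := b') hm')
  obtain ⟨hmm, hq1⟩ := pos_mul_eq hm0 hm0' hC1 hC2
  -- d = d'
  obtain ⟨q3, s3, u3, hA3, hB3, hC3⟩ := mem_Hsub_inj (heq ▸ e3_mem (v₁ := v₁) (v₂ := v₂) (a := a) (d := d) (b := b) hm)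
  obtain ⟨q4, s4, u4, hA4, hB4, hC4⟩ := mem_Hsub_inj (heq.symm ▸ e3_mem (v₁ := v₁') (v₂ := v₂') (a := a') (d := d') (b := b') hm')
  have hq3 : q3 = 0 := by
    rcases mul_eq_zero.mp hC3.symm with h | h
    · exact h
    · omega
  have hs3 : s3 = 0 := by
    rw [hq3, zero_mul, zero_add] at hA3
    rcases mul_eq_zero.mp hA3.symm with h | h
    · exact h
    · omega
  rw [hq3, hs3] at hB3
  simp only [zero_mul, zero_add] at hB3
  have hq4 : q4 = 0 := by
    rcases mul_eq_zero.mp hC4.symm with h | h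
    · exact h
    · omega
  have hs4 : s4 = 0 := by
    rw [hq4, zero_mul, zero_add] at hA4
    rcases mul_eq_zero.mp hA4.symm with h | h
    · exact h
    · omega
  rw [hq4, hs4] at hB4
  simp only [zero_mul, zero_add] at hB4
  obtain ⟨hdd, -⟩ := pos_mul_eq hd hd' hB3 hB4
  -- a = a' and b = b'
  obtain ⟨q5, s5, u5, hA5, hB5, hC5⟩ := mem_Hsub_inj (heq ▸ e2_mem (v₁ := v₁) (v₂ := v₂) (a := a) (d := d) (b := b) hm)
  obtain ⟨q6, s6, u6, hA6, hB6, hC6⟩ := mem_Hsub_inj (heq.symm ▸ e2_mem (v₁ := v₁') (v₂ := v₂') (a := a') (d := d') (b := b') hm')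
  have hq5 : q5 = 0 := by
    rcases mul_eq_zero.mp hC5.symm with h | h
    · exact h
    · omega
  have hq6 : q6 = 0 := by
    rcases mul_eq_zero.mp hC6.symm with h | h
    · exact h
    · omega
  rw [hq5] at hA5 hB5
  rw [hq6] at hA6 hB6
  simp only [zero_mul, zero_add] at hA5 hB5 hA6 hB6
  obtain ⟨haa, hs5⟩ := pos_mul_eq ha ha' hA5 hA6
  rw [hs5, one_mul] at hB5
  have hbb : b = b' ∧ u5 = 0 := by
    refine bounded_aux (by rw [hB5, hdd]) hb hbd hb' ?_
    · omega
  -- v₁ = v₁' and v₂ = v₂'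
  rw [hq1, one_mul] at hA1 hB1
  have hv1eq : v₁ = v₁' ∧ s1 = 0 := by
    refine bounded_aux (by rw [hA1, haa]) hv1 hv1a hv1' ?_
    · omega
  rw [hv1eq.2, zero_mul, add_zero] at hB1
  have hv2eq : v₂ = v₂' ∧ u1 = 0 := by
    refine bounded_aux (by rw [hB1, hdd]) hv2 hv2d hv2' ?_
    · omega
  exact ⟨hmm, haa, hdd, hbb.1, hv1eq.1, hv2eq.1⟩

end Inj

section Surj

lemma int_subgroup_gen (S : AddSubgroup ℤ) : ∃ a : ℤ, 0 ≤ a ∧ ∀ x, x ∈ S ↔ a ∣ x := by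
  obtain ⟨a, ha⟩ := Int.subgroup_cyclic S
  have hmem : ∀ x, x ∈ S ↔ a ∣ x := by
    intro x
    rw [ha, ← AddSubgroup.zmultiples_eq_closure, Int.mem_zmultiples_iff]
  rcases le_or_gt 0 a with h | h
  · exact ⟨a, h, hmem⟩
  · refine ⟨-a, by omega, fun x => ?_⟩
    rw [hmem x]
    exact ⟨fun h2 => h2.neg_left, fun h2 => (neg_dvd).mp h2⟩

lemma ellG3_app (x y : ℤ) : (AddEquiv.toMultiplicative ellG3) (Multiplicative.ofAdd (x, y)) =
    Multiplicative.ofAdd (-y, x - y) := rfl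

lemma phiG3_one_mod (r : ℤ) (h : r % 3 = 1) (x y : ℤ) :
    phiG3 (Multiplicative.ofAdd r) (Multiplicative.ofAdd (x, y)) =
      Multiplicative.ofAdd (-y, x - y) := by
  rw [phiG3, zpowersHom_apply, toAdd_ofAdd]
  have hr : r = 3 * (r / 3) + 1 := by omega
  rw [hr, zpow_add, zpow_mul, toMult_pow3, one_zpow, one_mul, zpow_one, ellG3_app]

lemma phiG3_two_mod (r : ℤ) (h : r % 3 = 2) (x y : ℤ) :
    phiG3 (Multiplicative.ofAdd r) (Multiplicative.ofAdd (x, y)) =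
      Multiplicative.ofAdd (y - x, -x) := by
  rw [phiG3, zpowersHom_apply, toAdd_ofAdd]
  have hr : r = 3 * (r / 3) + 2 := by omega
  rw [hr, zpow_add, zpow_mul, toMult_pow3, one_zpow, one_mul]
  show ((AddEquiv.toMultiplicative ellG3) * (AddEquiv.toMultiplicative ellG3)) _ = _
  rw [MulAut.mul_apply, ellG3_app, ellG3_app]
  exact congrArg Multiplicative.ofAdd (Prod.ext (by ring) (by ring))

@[simp] lemma toAdd_left_mk3 (x y r : ℤ) : Multiplicative.toAdd (mk3 x y r).left = (x, y) := rfl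
@[simp] lemma toAdd_right_mk3 (x y r : ℤ) : Multiplicative.toAdd (mk3 x y r).right = r := rfl

lemma mk3_mul_one_mod {x y r x' y' r' : ℤ} (h : r % 3 = 1) :
    mk3 x y r * mk3 x' y' r' = mk3 (x - y') (y + x' - y') (r + r') := by
  show (⟨_ * phiG3 _ _, _⟩ : PiG3) = _
  rw [show (mk3 x y r).right = Multiplicative.ofAdd r from rfl,
    show (mk3 x' y' r').left = Multiplicative.ofAdd (x', y') from rfl, phiG3_one_mod _ h]
  refine mk3_congr ?_ ?_ ?_ <;> (simp; try ring)

lemma mk3_mul_two_mod {x y r x' y' r' : ℤ} (h : r % 3 = 2) :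
    mk3 x y r * mk3 x' y' r' = mk3 (x + y' - x') (y - x') (r + r') := by
  show (⟨_ * phiG3 _ _, _⟩ : PiG3) = _
  rw [show (mk3 x y r).right = Multiplicative.ofAdd r from rfl,
    show (mk3 x' y' r').left = Multiplicative.ofAdd (x', y') from rfl, phiG3_two_mod _ h]
  refine mk3_congr ?_ ?_ ?_ <;> (simp; try ring)

lemma Rc_mul (g h : PiG3) : Rc (g * h) = Rc g + Rc h := rfl
lemma Rc_inv (g : PiG3) : Rc g⁻¹ = - Rc g := rfl

end Surj

lemma Hsub_surjective (n : ℕ) (hn : 0 < n) (H : Subgroup PiG3) (hidx : H.index = n)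
    (hiso : Nonempty (H ≃* Z3)) :
    ∃ (m a d b v₁ v₂ : ℤ) (hm : (3:ℤ) ∣ m), 0 < m ∧ 0 < a ∧ 0 < d ∧
      0 ≤ b ∧ b < d ∧ 0 ≤ v₁ ∧ v₁ < a ∧ 0 ≤ v₂ ∧ v₂ < d ∧ H = Hsub m a d b v₁ v₂ hm := by
  obtain ⟨e⟩ := hiso
  have hcomm : ∀ g h : PiG3, g ∈ H → h ∈ H → g * h = h * g := by
    intro g h hg hh
    have : (⟨g, hg⟩ : H) * ⟨h, hh⟩ = ⟨h, hh⟩ * ⟨g, hg⟩ := by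
      apply e.injective
      rw [map_mul, map_mul, mul_comm]
    exact congrArg Subtype.val this
  let RS : AddSubgroup ℤ :=
  { carrier := {r | ∃ x y, mk3 x y r ∈ H}
    zero_mem' := ⟨0, 0, by rw [mk3_one]; exact one_mem H⟩
    add_mem' := by
      rintro r r' ⟨x, y, h1⟩ ⟨x', y', h2⟩
      refine ⟨Xc (mk3 x y r * mk3 x' y' r'), Yc (mk3 x y r * mk3 x' y' r'), ?_⟩
      have hu : Rc (mk3 x y r * mk3 x' y' r') = r + r' := by rw [Rc_mul, Rc_mk3, Rc_mk3]
      rw [← hu, ← mk3_Xc]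
      exact mul_mem h1 h2
    neg_mem' := by
      rintro r ⟨x, y, h1⟩
      refine ⟨Xc (mk3 x y r)⁻¹, Yc (mk3 x y r)⁻¹, ?_⟩
      have hu : Rc (mk3 x y r)⁻¹ = -r := by rw [Rc_inv, Rc_mk3]
      rw [← hu, ← mk3_Xc]
      exact inv_mem h1 }
  obtain ⟨m, hm0le, hmmem⟩ := int_subgroup_gen RS
  have hmemRS : ∀ r : ℤ, (∃ x y, mk3 x y r ∈ H) ↔ m ∣ r := fun r => hmmem r
  have hm0 : 0 < m := by
    rcases hm0le.eq_or_lt with h | h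
    · exfalso
      have hker : H ≤ (SemidirectProduct.rightHom : PiG3 →* Multiplicative ℤ).ker := by
        intro g hg
        have hd : m ∣ Rc g := (hmemRS (Rc g)).mp ⟨Xc g, Yc g, by rw [← mk3_Xc]; exact hg⟩
        rw [← h] at hd
        have hr0 : Rc g = 0 := zero_dvd_iff.mp hd
        show SemidirectProduct.rightHom g = 1
        show g.right = 1
        have hgr : g.right = Multiplicative.ofAdd (Rc g) := rfl
        rw [hgr, hr0]; rfl
      have h1 : (SemidirectProduct.rightHom : PiG3 →* Multiplicative ℤ).ker.index ∣ H.index :=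
        Subgroup.index_dvd_of_le hker
      rw [Subgroup.index_ker,
        MonoidHom.range_eq_top.mpr SemidirectProduct.rightHom_surjective, hidx] at h1
      have h2 : Nat.card (⊤ : Subgroup (Multiplicative ℤ)) = 0 := by
        rw [Nat.card_congr Subgroup.topEquiv.toEquiv]
        exact Nat.card_eq_zero_of_infinite
      rw [h2] at h1
      omega
    · exact h
  haveI : H.FiniteIndex := ⟨by rw [hidx]; omega⟩
  let C : Subgroup (Multiplicative (ℤ × ℤ)) := H.comap (SemidirectProduct.inl (φ := phiG3))
  have hCindex : C.index ≠ 0 := by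
    show (H.comap (SemidirectProduct.inl (φ := phiG3))).index ≠ 0
    rw [Subgroup.index_comap]
    show (H.subgroupOf _).index ≠ 0
    exact Subgroup.FiniteIndex.index_ne_zero
  set N : ℕ := C.index with hN
  have hNmem1 : mk3 (N : ℤ) 0 0 ∈ H := by
    have h1 : (Multiplicative.ofAdd ((1:ℤ), (0:ℤ))) ^ N ∈ C := Subgroup.pow_index_mem C _
    have h2 : (Multiplicative.ofAdd ((1:ℤ), (0:ℤ))) ^ N = Multiplicative.ofAdd ((N:ℤ), (0:ℤ)) := by
      rw [← ofAdd_nsmul]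
      congr 1
      rw [Prod.smul_mk]
      congr 1 <;> simp
    rw [h2] at h1
    exact Subgroup.mem_comap.mp h1
  have hNmem2 : mk3 0 (N : ℤ) 0 ∈ H := by
    have h1 : (Multiplicative.ofAdd ((0:ℤ), (1:ℤ))) ^ N ∈ C := Subgroup.pow_index_mem C _
    have h2 : (Multiplicative.ofAdd ((0:ℤ), (1:ℤ))) ^ N = Multiplicative.ofAdd ((0:ℤ), (N:ℤ)) := by
      rw [← ofAdd_nsmul]
      congr 1
      rw [Prod.smul_mk]
      congr 1 <;> simp
    rw [h2] at h1
    exact Subgroup.mem_comap.mp h1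
  have hNne : ((N:ℤ)) ≠ 0 := by
    simp only [ne_eq, Nat.cast_eq_zero]
    exact hCindex
  obtain ⟨x₀, y₀, hg₀⟩ := (hmemRS m).mpr dvd_rfl
  have hm3 : (3:ℤ) ∣ m := by
    by_contra h3
    have hc := hcomm _ _ hg₀ hNmem1
    have hug : mk3 (N:ℤ) 0 0 * mk3 x₀ y₀ m = mk3 ((N:ℤ) + x₀) y₀ m := by
      rw [mk3_mul _ _ _ _ _ _ (by norm_num)]
      exact mk3_congr (by ring) (by ring) (by ring)
    have hcase : m % 3 = 1 ∨ m % 3 = 2 := by omega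
    rcases hcase with hcc | hcc
    · rw [mk3_mul_one_mod hcc, hug] at hc
      obtain ⟨h1, h2, h3'⟩ := mk3_inj hc
      omega
    · rw [mk3_mul_two_mod hcc, hug] at hc
      obtain ⟨h1, h2, h3'⟩ := mk3_inj hc
      omega
  -- the lattice part
  let XS : AddSubgroup ℤ :=
  { carrier := {x | ∃ y, mk3 x y 0 ∈ H}
    zero_mem' := ⟨0, by show mk3 0 0 0 ∈ H; rw [mk3_one]; exact one_mem H⟩
    add_mem' := by
      rintro x x' ⟨y, h1⟩ ⟨y', h2⟩
      refine ⟨y + y', ?_⟩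
      have h3 := mul_mem h1 h2
      rwa [mk3_mul _ _ _ _ _ _ (by norm_num), show (0:ℤ) + 0 = 0 by ring] at h3
    neg_mem' := by
      rintro x ⟨y, h1⟩
      refine ⟨-y, ?_⟩
      have h3 := inv_mem h1
      rwa [mk3_inv _ _ _ (by norm_num), show -(0:ℤ) = 0 by ring] at h3 }
  let DS : AddSubgroup ℤ :=
  { carrier := {z | mk3 0 z 0 ∈ H}
    zero_mem' := by
      show mk3 0 0 0 ∈ H
      rw [mk3_one]; exact one_mem H
    add_mem' := by
      intro z z' h1 h2
      show mk3 0 (z + z') 0 ∈ H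
      have h1' : mk3 0 z 0 ∈ H := h1
      have h2' : mk3 0 z' 0 ∈ H := h2
      have h3 := mul_mem h1' h2'
      rwa [mk3_mul _ _ _ _ _ _ (by norm_num), show (0:ℤ) + 0 = 0 by ring] at h3
    neg_mem' := by
      intro z h1
      show mk3 0 (-z) 0 ∈ H
      have h1' : mk3 0 z 0 ∈ H := h1
      have h3 := inv_mem h1'
      rwa [mk3_inv _ _ _ (by norm_num), show -(0:ℤ) = 0 by ring] at h3 }
  obtain ⟨a, ha0le, haS⟩ := int_subgroup_gen XS
  obtain ⟨d, hd0le, hdS⟩ := int_subgroup_gen DS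
  have hamem : ∀ x : ℤ, (∃ y, mk3 x y 0 ∈ H) ↔ a ∣ x := fun x => haS x
  have hdmem : ∀ z : ℤ, (mk3 0 z 0 ∈ H) ↔ d ∣ z := fun z => hdS z
  have ha0 : 0 < a := by
    rcases ha0le.eq_or_lt with h | h
    · exfalso
      have := (hamem (N:ℤ)).mp ⟨0, hNmem1⟩
      rw [← h] at this
      exact hNne (zero_dvd_iff.mp this)
    · exact h
  have hd0 : 0 < d := by
    rcases hd0le.eq_or_lt with h | h
    · exfalso
      have := (hdmem (N:ℤ)).mp hNmem2
      rw [← h] at this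
      exact hNne (zero_dvd_iff.mp this)
    · exact h
  obtain ⟨b₀, hb₀⟩ := (hamem a).mpr dvd_rfl
  have hdz : ∀ t : ℤ, mk3 0 (t*d) 0 ∈ H := by
    intro t
    have h1 := zpow_mem ((hdmem d).mpr dvd_rfl) t
    rw [mk3_zpow _ _ _ (by norm_num)] at h1
    simp only [mul_zero] at h1
    exact h1
  set b : ℤ := b₀ % d with hbdef
  have hbmem : mk3 a b 0 ∈ H := by
    have h1 := mul_mem hb₀ (hdz (-(b₀/d)))
    rw [mk3_mul _ _ _ _ _ _ (by norm_num)] at h1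
    have heq : mk3 (a + 0) (b₀ + -(b₀/d)*d) (0 + 0) = mk3 a b 0 :=
      mk3_congr (by ring) (by rw [hbdef, Int.emod_def]; ring) (by ring)
    rwa [heq] at h1
  have haz : ∀ t : ℤ, mk3 (t*a) (t*b) 0 ∈ H := by
    intro t
    have h1 := zpow_mem hbmem t
    rw [mk3_zpow _ _ _ (by norm_num)] at h1
    simp only [mul_zero] at h1
    exact h1
  -- the coset representative
  have step1 : mk3 (x₀ % a) (y₀ - (x₀/a)*b) m ∈ H := by
    have h1 := mul_mem hg₀ (haz (-(x₀/a)))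
    rw [mk3_mul _ _ _ _ _ _ hm3] at h1
    have heq : mk3 (x₀ + -(x₀/a)*a) (y₀ + -(x₀/a)*b) (m + 0) = mk3 (x₀ % a) (y₀ - (x₀/a)*b) m :=
      mk3_congr (by rw [Int.emod_def]; ring) (by ring) (by ring)
    rwa [heq] at h1
  set v₁ : ℤ := x₀ % a with hv1def
  set y₁ : ℤ := y₀ - (x₀/a)*b with hy1def
  set v₂ : ℤ := y₁ % d with hv2def
  have hvmem : mk3 v₁ v₂ m ∈ H := by
    have h1 := mul_mem step1 (hdz (-(y₁/d)))
    rw [mk3_mul _ _ _ _ _ _ hm3] at h1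
    have heq : mk3 (v₁ + 0) (y₁ + -(y₁/d)*d) (m + 0) = mk3 v₁ v₂ m :=
      mk3_congr (by ring) (by rw [hv2def, Int.emod_def]; ring) (by ring)
    rwa [heq] at h1
  have hvz : ∀ t : ℤ, mk3 (t*v₁) (t*v₂) (t*m) ∈ H := by
    intro t
    have h1 := zpow_mem hvmem t
    rwa [mk3_zpow _ _ _ hm3] at h1
  refine ⟨m, a, d, b, v₁, v₂, hm3, hm0, ha0, hd0, Int.emod_nonneg b₀ (by omega),
    Int.emod_lt_of_pos b₀ hd0, Int.emod_nonneg x₀ (by omega), Int.emod_lt_of_pos x₀ ha0,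
    Int.emod_nonneg y₁ (by omega), Int.emod_lt_of_pos y₁ hd0, ?_⟩
  ext g
  constructor
  · intro hg
    obtain ⟨x, y, r, rfl⟩ := mk3_surj g
    have hmr : m ∣ r := (hmemRS r).mp ⟨x, y, hg⟩
    set q : ℤ := r / m with hqdef
    have hq : q * m = r := Int.ediv_mul_cancel hmr
    have h3r : (3:ℤ) ∣ r := dvd_trans hm3 hmr
    have s1 : mk3 (x - q*v₁) (y - q*v₂) 0 ∈ H := by
      have h1 := mul_mem hg (hvz (-q))
      rw [mk3_mul _ _ _ _ _ _ h3r] at h1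
      have heq : mk3 (x + -q*v₁) (y + -q*v₂) (r + -q*m) = mk3 (x - q*v₁) (y - q*v₂) 0 :=
        mk3_congr (by ring) (by ring) (by linarith)
      rwa [heq] at h1
    have has : a ∣ (x - q*v₁) := (hamem _).mp ⟨y - q*v₂, s1⟩
    set s : ℤ := (x - q*v₁)/a with hsdef
    have hs : s * a = x - q*v₁ := Int.ediv_mul_cancel has
    have s2 : mk3 0 (y - q*v₂ - s*b) 0 ∈ H := by
      have h1 := mul_mem s1 (haz (-s))
      rw [mk3_mul _ _ _ _ _ _ (by norm_num)] at h1
      have heq : mk3 (x - q*v₁ + -s*a) (y - q*v₂ + -s*b) (0 + 0) = mk3 0 (y - q*v₂ - s*b) 0 :=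
        mk3_congr (by linarith) (by ring) (by ring)
      rwa [heq] at h1
    have hdu : d ∣ (y - q*v₂ - s*b) := (hdmem _).mp s2
    set u : ℤ := (y - q*v₂ - s*b)/d with hudef
    have hu : u * d = y - q*v₂ - s*b := Int.ediv_mul_cancel hdu
    rw [mem_Hsub]
    exact ⟨q, s, u, mk3_congr (by linarith) (by linarith) (by linarith)⟩
  · intro hg
    rw [mem_Hsub] at hg
    obtain ⟨q, s, u, rfl⟩ := hg
    have t1 : mk3 (s*a) (s*b + u*d) 0 ∈ H := by
      have h1 := mul_mem (haz s) (hdz u)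
      rw [mk3_mul _ _ _ _ _ _ (by norm_num)] at h1
      have heq : mk3 (s*a + 0) (s*b + u*d) (0 + 0) = mk3 (s*a) (s*b + u*d) 0 :=
        mk3_congr (by ring) (by ring) (by ring)
      rwa [heq] at h1
    have t2 := mul_mem (hvz q) t1
    rw [mk3_mul _ _ _ _ _ _ (Dvd.dvd.mul_left hm3 q)] at t2
    have heq : mk3 (q*v₁ + s*a) (q*v₂ + (s*b + u*d)) (q*m + 0)
        = mk3 (q*v₁ + s*a) (q*v₂ + s*b + u*d) (q*m) :=
      mk3_congr (by ring) (by ring) (by ring)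
    rwa [heq] at t2

def TupP (n : ℕ) (t : ℕ × ℕ × ℕ × ℕ × ℕ × ℕ) : Prop :=
  3 * t.1 * t.2.1 * t.2.2.1 = n ∧ t.2.2.2.1 < t.2.2.1 ∧ t.2.2.2.2.1 < t.2.1 ∧
    t.2.2.2.2.2 < t.2.2.1

lemma count_tuples (n : ℕ) (hn : 0 < n) :
    Nat.card {t : ℕ × ℕ × ℕ × ℕ × ℕ × ℕ // TupP n t} =
      (if 3 ∣ n then omegaFn (n / 3) else 0) := by
  by_cases h3 : 3 ∣ n
  · rw [if_pos h3]
    obtain ⟨n', rfl⟩ := h3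
    have hn' : 0 < n' := by omega
    have hdiv : 3 * n' / 3 = n' := by omega
    rw [hdiv]
    -- base finset
    set D : Finset (ℕ × ℕ × ℕ) :=
      (n'.divisors ×ˢ n'.divisors ×ˢ n'.divisors).filter
        (fun u => u.1 * u.2.1 * u.2.2 = n') with hD
    have hmemD : ∀ u : ℕ × ℕ × ℕ, u ∈ D ↔ u.1 * u.2.1 * u.2.2 = n' := by
      intro u
      rw [hD, Finset.mem_filter, Finset.mem_product, Finset.mem_product]
      constructor
      · tauto
      · intro h
        refine ⟨⟨?_, ?_, ?_⟩, h⟩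
        · exact Nat.mem_divisors.mpr ⟨⟨u.2.1 * u.2.2, by rw [← h]; ring⟩, by omega⟩
        · exact Nat.mem_divisors.mpr ⟨⟨u.1 * u.2.2, by rw [← h]; ring⟩, by omega⟩
        · exact Nat.mem_divisors.mpr ⟨⟨u.1 * u.2.1, by rw [← h]; ring⟩, by omega⟩
    -- equivalence with a sigma type
    let e1 : {t : ℕ × ℕ × ℕ × ℕ × ℕ × ℕ // TupP (3 * n') t} ≃
        Σ x : {u : ℕ × ℕ × ℕ // u ∈ D}, Fin x.1.2.2 × Fin x.1.2.1 × Fin x.1.2.2 :=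
      { toFun := fun t =>
          ⟨⟨(t.1.1, t.1.2.1, t.1.2.2.1), (hmemD _).mpr (by
              obtain ⟨h1, -, -, -⟩ := t.2
              dsimp
              have h2 : 3 * (t.1.1 * t.1.2.1 * t.1.2.2.1) = 3 * n' := by
                calc 3 * (t.1.1 * t.1.2.1 * t.1.2.2.1)
                    = 3 * t.1.1 * t.1.2.1 * t.1.2.2.1 := by ring
                  _ = 3 * n' := h1
              exact Nat.eq_of_mul_eq_mul_left (by norm_num) h2)⟩,
            ⟨t.1.2.2.2.1, t.2.2.1⟩, ⟨t.1.2.2.2.2.1, t.2.2.2.1⟩, ⟨t.1.2.2.2.2.2, t.2.2.2.2⟩⟩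
        invFun := fun x =>
          ⟨(x.1.1.1, x.1.1.2.1, x.1.1.2.2, x.2.1.1, x.2.2.1.1, x.2.2.2.1),
            by
              have hx := (hmemD _).mp x.1.2
              refine ⟨?_, x.2.1.2, x.2.2.1.2, x.2.2.2.2⟩
              dsimp at hx ⊢
              calc 3 * x.1.1.1 * x.1.1.2.1 * x.1.1.2.2
                  = 3 * (x.1.1.1 * x.1.1.2.1 * x.1.1.2.2) := by ring
                _ = 3 * n' := by rw [hx]⟩
        left_inv := fun t => rfl
        right_inv := fun x => rfl }
    rw [Nat.card_congr e1, Nat.card_eq_fintype_card, Fintype.card_sigma]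
    have hsum : ∀ x : {u : ℕ × ℕ × ℕ // u ∈ D},
        Fintype.card (Fin x.1.2.2 × Fin x.1.2.1 × Fin x.1.2.2) =
          x.1.2.2 * (x.1.2.1 * x.1.2.2) := by
      intro x
      rw [Fintype.card_prod, Fintype.card_prod, Fintype.card_fin, Fintype.card_fin]
    rw [Finset.sum_congr rfl (fun x _ => hsum x)]
    rw [Finset.sum_coe_sort D (fun u => u.2.2 * (u.2.1 * u.2.2))]
    -- now pure divisor arithmetic
    have key : ∑ u ∈ D, u.2.2 * (u.2.1 * u.2.2)
        = ∑ x ∈ n'.divisorsAntidiagonal.sigma (fun jk => jk.2.divisorsAntidiagonal),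
            x.2.2 * (x.2.1 * x.2.2) := by
      refine Finset.sum_nbij' (fun u => ⟨(u.1, u.2.1 * u.2.2), (u.2.1, u.2.2)⟩)
        (fun x => (x.1.1, x.2.1, x.2.2)) ?_ ?_ ?_ ?_ ?_
      · intro u hu
        have h := (hmemD u).mp hu
        rw [Finset.mem_sigma]
        constructor
        · rw [Nat.mem_divisorsAntidiagonal]
          constructor
          · dsimp; rw [← h]; ring
          · omega
        · rw [Nat.mem_divisorsAntidiagonal]
          refine ⟨rfl, fun hc => ?_⟩
          dsimp at hc
          rcases Nat.mul_eq_zero.mp hc with h0 | h0 <;>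
            (rw [h0] at h; simp at h; omega)
      · intro x hx
        rw [Finset.mem_sigma, Nat.mem_divisorsAntidiagonal, Nat.mem_divisorsAntidiagonal] at hx
        rw [hmemD]
        dsimp
        rw [show x.1.1 * x.2.1 * x.2.2 = x.1.1 * (x.2.1 * x.2.2) by ring, hx.2.1, hx.1.1]
      · intro u hu; rfl
      · intro x hx
        rw [Finset.mem_sigma, Nat.mem_divisorsAntidiagonal, Nat.mem_divisorsAntidiagonal] at hx
        have h1 : x.1.2 = x.2.1 * x.2.2 := hx.2.1.symm
        obtain ⟨⟨j, k⟩, ⟨aa, dd⟩⟩ := x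
        dsimp at h1 ⊢
        subst h1
        rfl
      · intro u hu; rfl
    rw [key, Finset.sum_sigma]
    have inner : ∀ jk ∈ n'.divisorsAntidiagonal,
        (∑ ad ∈ jk.2.divisorsAntidiagonal, ad.2 * (ad.1 * ad.2)) = jk.2 * sigma1 jk.2 := by
      intro jk hjk
      have h1 : ∀ ad ∈ jk.2.divisorsAntidiagonal, ad.2 * (ad.1 * ad.2) = jk.2 * ad.2 := by
        intro ad had
        rw [Nat.mem_divisorsAntidiagonal] at had
        rw [← had.1]; ring
      rw [Finset.sum_congr rfl h1, ← Finset.mul_sum]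
      congr 1
      rw [Nat.sum_divisorsAntidiagonal' (f := fun _ y => y)]
      unfold sigma1
      exact Finset.sum_congr rfl (fun x _ => rfl)
    rw [Finset.sum_congr rfl inner]
    rw [Nat.sum_divisorsAntidiagonal' (f := fun _ y => y * sigma1 y)]
    unfold omegaFn
    exact Finset.sum_congr rfl (fun x _ => rfl)
  · rw [if_neg h3]
    have : IsEmpty {t : ℕ × ℕ × ℕ × ℕ × ℕ × ℕ // TupP n t} := by
      constructor
      rintro ⟨t, ht, -⟩
      exact h3 ⟨t.1 * t.2.1 * t.2.2.1, by rw [← ht]; ring⟩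
    exact Nat.card_of_isEmpty

lemma Hsub_congr {m a d b v₁ v₂ m' a' d' b' v₁' v₂' : ℤ} {hm : (3:ℤ) ∣ m} {hm' : (3:ℤ) ∣ m'}
    (h1 : m = m') (h2 : a = a') (h3 : d = d') (h4 : b = b') (h5 : v₁ = v₁') (h6 : v₂ = v₂') :
    Hsub m a d b v₁ v₂ hm = Hsub m' a' d' b' v₁' v₂' hm' := by
  subst h1; subst h2; subst h3; subst h4; subst h5; subst h6; rfl

/-- the number of index-`n` subgroups of `π₁(G₃)` isomorphic to `ℤ³`. -/
theorem stmt2 (n : ℕ) (hn : 0 < n) :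
    Nat.card {H : Subgroup PiG3 // H.index = n ∧ Nonempty (H ≃* Z3)} =
      (if 3 ∣ n then omegaFn (n / 3) else 0) := by
  rw [← count_tuples n hn]
  refine (Nat.card_congr (Equiv.ofBijective ?_ ⟨?_, ?_⟩)).symm
  · -- the map from tuples to subgroups
    refine fun t => ⟨Hsub ((3 * t.1.1 : ℕ) : ℤ) (t.1.2.1 : ℤ) (t.1.2.2.1 : ℤ)
      (t.1.2.2.2.1 : ℤ) (t.1.2.2.2.2.1 : ℤ) (t.1.2.2.2.2.2 : ℤ)
      ⟨(t.1.1 : ℤ), by push_cast; ring⟩, ?_, ?_⟩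
    · -- index
      obtain ⟨h1, h2, h3, h4⟩ := t.2
      have hj : t.1.1 ≠ 0 := by rintro h0; rw [h0] at h1; simp at h1; omega
      have ha : t.1.2.1 ≠ 0 := by rintro h0; rw [h0] at h1; simp at h1; omega
      have hd : t.1.2.2.1 ≠ 0 := by rintro h0; rw [h0] at h1; simp at h1; omega
      rw [Hsub_index _ _ _ _ _ _ _ (by exact_mod_cast Nat.pos_of_ne_zero (by simpa using hj))
        (by exact_mod_cast Nat.pos_of_ne_zero ha) (by exact_mod_cast Nat.pos_of_ne_zero hd)]
      simp only [Int.toNat_natCast]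
      calc 3 * t.1.1 * (t.1.2.1 * t.1.2.2.1) = 3 * t.1.1 * t.1.2.1 * t.1.2.2.1 := by ring
        _ = n := h1
    · -- isomorphic to Z3
      obtain ⟨h1, h2, h3, h4⟩ := t.2
      have hj : t.1.1 ≠ 0 := by rintro h0; rw [h0] at h1; simp at h1; omega
      have ha : t.1.2.1 ≠ 0 := by rintro h0; rw [h0] at h1; simp at h1; omega
      have hd : t.1.2.2.1 ≠ 0 := by rintro h0; rw [h0] at h1; simp at h1; omega
      exact Hsub_iso_Z3 _ (by exact_mod_cast Nat.pos_of_ne_zero (by simpa using hj))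
        (by exact_mod_cast Nat.pos_of_ne_zero ha) (by exact_mod_cast Nat.pos_of_ne_zero hd)
  · -- injectivity
    rintro ⟨⟨j, a, d, b, v1, v2⟩, ht⟩ ⟨⟨j', a', d', b', v1', v2'⟩, ht'⟩ hEq
    have hHeq := congrArg Subtype.val hEq
    dsimp at hHeq
    obtain ⟨h1, h2, h3, h4⟩ := ht
    obtain ⟨h1', h2', h3', h4'⟩ := ht'
    have hj : j ≠ 0 := by rintro h0; rw [h0] at h1; simp at h1; omega
    have ha : a ≠ 0 := by rintro h0; rw [h0] at h1; simp at h1; omega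
    have hd : d ≠ 0 := by rintro h0; rw [h0] at h1; simp at h1; omega
    have hj' : j' ≠ 0 := by rintro h0; rw [h0] at h1'; simp at h1'; omega
    have ha' : a' ≠ 0 := by rintro h0; rw [h0] at h1'; simp at h1'; omega
    have hd' : d' ≠ 0 := by rintro h0; rw [h0] at h1'; simp at h1'; omega
    have := Hsub_param_inj _ _ (by exact_mod_cast Nat.pos_of_ne_zero (by simp [hj]))
      (by exact_mod_cast Nat.pos_of_ne_zero ha) (by exact_mod_cast Nat.pos_of_ne_zero hd)
      (by exact_mod_cast Nat.pos_of_ne_zero (by simp [hj']))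
      (by exact_mod_cast Nat.pos_of_ne_zero ha') (by exact_mod_cast Nat.pos_of_ne_zero hd')
      (by positivity) (by exact_mod_cast h2) (by positivity) (by exact_mod_cast h3)
      (by positivity) (by exact_mod_cast h4)
      (by positivity) (by exact_mod_cast h2') (by positivity) (by exact_mod_cast h3')
      (by positivity) (by exact_mod_cast h4') hHeq
    obtain ⟨e1, e2, e3, e4, e5, e6⟩ := this
    apply Subtype.ext
    simp only [Prod.mk.injEq]
    refine ⟨by omega, by omega, by omega, by omega, by omega, by omega⟩
  · -- surjectivity
    rintro ⟨H, hidx, hiso⟩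
    obtain ⟨m, a, d, b, v₁, v₂, hm3, hm0, ha0, hd0, hb0, hbd, hv10, hv1a, hv20, hv2d, hHeq⟩ :=
      Hsub_surjective n hn H hidx hiso
    have hidx2 : m.toNat * (a.toNat * d.toNat) = n := by
      rw [← hidx, hHeq, Hsub_index _ _ _ _ _ _ _ hm0 ha0 hd0]
    have hM3 : 3 * (m.toNat / 3) = m.toNat := by omega
    refine ⟨⟨(m.toNat / 3, a.toNat, d.toNat, b.toNat, v₁.toNat, v₂.toNat),
      ⟨?_, show b.toNat < d.toNat by omega, show v₁.toNat < a.toNat by omega,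
       show v₂.toNat < d.toNat by omega⟩⟩, ?_⟩
    · show 3 * (m.toNat / 3) * a.toNat * d.toNat = n
      calc 3 * (m.toNat / 3) * a.toNat * d.toNat = m.toNat * a.toNat * d.toNat := by rw [hM3]
        _ = m.toNat * (a.toNat * d.toNat) := by ring
        _ = n := hidx2
    · apply Subtype.ext
      show Hsub _ _ _ _ _ _ _ = H
      rw [hHeq]
      exact Hsub_congr
        (show ((3 * (m.toNat / 3) : ℕ) : ℤ) = m by push_cast; omega)
        (show ((a.toNat : ℕ) : ℤ) = a by omega)
        (show ((d.toNat : ℕ) : ℤ) = d by omega)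
        (show ((b.toNat : ℕ) : ℤ) = b by omega)
        (show ((v₁.toNat : ℕ) : ℤ) = v₁ by omega)
        (show ((v₂.toNat : ℕ) : ℤ) = v₂ by omega)
end
end

section
/- Every subgroup of finite index n in the group π₁(G₅) = ℤ² ⋊ ℤ (where the generator of ℤ acts on ℤ² by the order-6 automorphism (x,y) ↦ (x−y, x)) is isomorphic, as a group, to exactly one of the following four groups: π₁(G₅), π₁(G₃), π₁(G₂), or ℤ³. -/
open scoped Classical

noncomputable section

namespace Eis

/-- Multiplication making `ℤ × ℤ` into `ℤ[ζ]`, `ζ² = -ζ - 1`. -/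
def emul (x y : ℤ × ℤ) : ℤ × ℤ :=
  (x.1 * y.1 - x.2 * y.2, x.1 * y.2 + x.2 * y.1 - x.2 * y.2)

def enorm (x : ℤ × ℤ) : ℤ := x.1 ^ 2 - x.1 * x.2 + x.2 ^ 2

lemma emul_comm (x y : ℤ × ℤ) : emul x y = emul y x := by
  simp only [emul, Prod.ext_iff]; constructor <;> ring

lemma emul_assoc (x y z : ℤ × ℤ) : emul (emul x y) z = emul x (emul y z) := by
  simp only [emul, Prod.ext_iff]; constructor <;> ring

lemma add_emul (x y z : ℤ × ℤ) : emul (x + y) z = emul x z + emul y z := by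
  simp only [emul, Prod.ext_iff, Prod.fst_add, Prod.snd_add]; constructor <;> ring

lemma sub_emul (x y z : ℤ × ℤ) : emul (x - y) z = emul x z - emul y z := by
  simp only [emul, Prod.ext_iff, Prod.fst_sub, Prod.snd_sub]; constructor <;> ring

lemma enorm_mul (x y : ℤ × ℤ) : enorm (emul x y) = enorm x * enorm y := by
  simp only [emul, enorm]; ring

lemma enorm_nonneg (x : ℤ × ℤ) : 0 ≤ enorm x := by
  have := sq_nonneg (2 * x.1 - x.2); have := sq_nonneg x.2; simp only [enorm]; nlinarith

lemma enorm_eq_zero {x : ℤ × ℤ} : enorm x = 0 ↔ x = 0 := by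
  constructor
  · intro h
    have h1 := sq_nonneg (2 * x.1 - x.2); have h2 := sq_nonneg x.2
    simp only [enorm] at h
    have hx2 : x.2 = 0 := by nlinarith
    have hx1 : x.1 = 0 := by nlinarith
    exact Prod.ext hx1 hx2
  · rintro rfl; simp [enorm]

lemma enorm_pos {x : ℤ × ℤ} (hx : x ≠ 0) : 0 < enorm x :=
  lt_of_le_of_ne (enorm_nonneg x) (fun h => hx (enorm_eq_zero.mp h.symm))

lemma zsmul_emul (x : ℤ × ℤ) (q : ℤ × ℤ) :
    emul q x = q.1 • x + q.2 • emul (0, 1) x := by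
  simp only [emul, Prod.ext_iff, Prod.smul_fst, Prod.smul_snd, Prod.fst_add, Prod.snd_add,
    smul_eq_mul]
  constructor <;> ring

/-- Division with remainder. -/
lemma exists_div (x y : ℤ × ℤ) (hy : y ≠ 0) : ∃ q, enorm (x - emul q y) < enorm y := by
  set n : ℤ := enorm y with hn
  have hnpos : 0 < n := enorm_pos hy
  set cy : ℤ × ℤ := (y.1 - y.2, -y.2) with hcy
  have hyc : emul y cy = (n, 0) := by simp only [emul, hcy, hn, enorm, Prod.ext_iff]; constructor <;> ring
  have hcn : enorm cy = n := by simp only [enorm, hcy, hn]; ring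
  set e : ℤ := (emul x cy).1 with he
  set f : ℤ := (emul x cy).2 with hf
  set q1 : ℤ := round ((e : ℚ) / (n : ℚ)) with hq1
  set q2 : ℤ := round ((f : ℚ) / (n : ℚ)) with hq2
  refine ⟨(q1, q2), ?_⟩
  set r : ℤ × ℤ := x - emul (q1, q2) y with hr
  have key : emul r cy = (e - q1 * n, f - q2 * n) := by
    rw [hr, sub_emul, emul_assoc, hyc]
    simp only [he, hf, emul, Prod.ext_iff, Prod.fst_sub, Prod.snd_sub]
    constructor <;> ring
  have hn0 : (0:ℚ) < (n:ℚ) := by exact_mod_cast hnpos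
  have hb1 : |(e : ℚ) - q1 * n| ≤ n / 2 := by
    have h := abs_sub_round ((e : ℚ) / (n : ℚ))
    have he2 : ((e:ℚ) - q1 * n) = ((e:ℚ)/n - q1) * n := by field_simp
    rw [he2, abs_mul, abs_of_pos hn0]
    calc |(e : ℚ)/n - q1| * n ≤ 1/2 * n := mul_le_mul_of_nonneg_right h (le_of_lt hn0)
      _ = n / 2 := by ring
  have hb2 : |(f : ℚ) - q2 * n| ≤ n / 2 := by
    have h := abs_sub_round ((f : ℚ) / (n : ℚ))
    have he2 : ((f:ℚ) - q2 * n) = ((f:ℚ)/n - q2) * n := by field_simp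
    rw [he2, abs_mul, abs_of_pos hn0]
    calc |(f : ℚ)/n - q2| * n ≤ 1/2 * n := mul_le_mul_of_nonneg_right h (le_of_lt hn0)
      _ = n / 2 := by ring
  -- norm bound in ℚ
  have hq : (enorm (e - q1 * n, f - q2 * n) : ℚ) < (n : ℚ) * n := by
    set a : ℚ := (e : ℚ) - q1 * n
    set b : ℚ := (f : ℚ) - q2 * n
    have hcast : (enorm (e - q1 * n, f - q2 * n) : ℚ) = a ^ 2 - a * b + b ^ 2 := by
      simp only [enorm]; push_cast; ring
    rw [hcast]
    obtain ⟨ha1, ha2⟩ := abs_le.mp hb1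
    obtain ⟨hb1', hb2'⟩ := abs_le.mp hb2
    have hn1 : (1:ℚ) ≤ (n:ℚ) := by exact_mod_cast hnpos
    have h3 : a ^ 2 ≤ (n/2)^2 := sq_le_sq' ha1 ha2
    have h4 : b ^ 2 ≤ (n/2)^2 := sq_le_sq' hb1' hb2'
    have h5 : -(a*b) ≤ (n/2)^2 := by
      calc -(a*b) ≤ |a*b| := neg_le_abs _
        _ = |a| * |b| := abs_mul a b
        _ ≤ (n/2)*(n/2) := by
            apply mul_le_mul hb1 hb2 (abs_nonneg _) (by positivity)
        _ = (n/2)^2 := by ring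
    have h6 : (1:ℚ) ≤ (n:ℚ) * (n:ℚ) := by nlinarith [hn1]
    have h7 : ((n:ℚ)/2)^2 = ((n:ℚ) * (n:ℚ))/4 := by ring
    clear_value a b
    linarith [h3, h4, h5, h6, h7]
  have hq' : enorm (e - q1 * n, f - q2 * n) < n * n := by exact_mod_cast hq
  have hkey : enorm r * n = enorm (e - q1 * n, f - q2 * n) := by
    rw [← key, enorm_mul, hcn]
  have : enorm r * n < n * n := by rw [hkey]; exact hq'
  exact lt_of_mul_lt_mul_right this (le_of_lt hnpos)

lemma emul_mem (L : AddSubgroup (ℤ × ℤ)) (hζ : ∀ x ∈ L, emul (0, 1) x ∈ L)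
    (q : ℤ × ℤ) {x : ℤ × ℤ} (hx : x ∈ L) : emul q x ∈ L := by
  rw [zsmul_emul]
  exact L.add_mem (L.zsmul_mem hx _) (L.zsmul_mem (hζ x hx) _)

/-- Any nonzero subgroup of `ℤ²` closed under `ζ`-multiplication is principal. -/
lemma exists_gen (L : AddSubgroup (ℤ × ℤ)) (hζ : ∀ x ∈ L, emul (0, 1) x ∈ L)
    {x0 : ℤ × ℤ} (hx0 : x0 ∈ L) (hx0ne : x0 ≠ 0) :
    ∃ α, α ∈ L ∧ α ≠ 0 ∧ ∀ x ∈ L, ∃ z, emul z α = x := by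
  have hP : ∃ m : ℕ, ∃ x, x ∈ L ∧ x ≠ 0 ∧ (enorm x).toNat = m :=
    ⟨(enorm x0).toNat, x0, hx0, hx0ne, rfl⟩
  classical
  obtain ⟨α, hαL, hαne, hαm⟩ := Nat.find_spec hP
  refine ⟨α, hαL, hαne, fun x hx => ?_⟩
  have hmin : ∀ y ∈ L, y ≠ 0 → enorm α ≤ enorm y := by
    intro y hyL hyne
    by_contra hlt
    push_neg at hlt
    have h1 : (enorm y).toNat < (enorm α).toNat := by
      rw [Int.toNat_lt_toNat (enorm_pos hαne)]; exact hlt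
    rw [hαm] at h1
    exact Nat.find_min hP h1 ⟨y, hyL, hyne, rfl⟩
  obtain ⟨q, hq⟩ := exists_div x α hαne
  by_cases hr : x - emul q α = 0
  · exact ⟨q, by linear_combination (norm := module) -hr⟩
  · exfalso
    have hrL : x - emul q α ∈ L := L.sub_mem hx (emul_mem L hζ q hαL)
    exact absurd hq (not_lt.mpr (hmin _ hrL hr))

end Eis

namespace Stmt5Aux
open SemidirectProduct Multiplicative

abbrev A2 : Type := Multiplicative (ℤ × ℤ)

instance addAutZ2Group : Group (AddAut (ℤ × ℤ)) where
  mul g h := AddEquiv.trans h g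
  one := AddEquiv.refl _
  inv := AddEquiv.symm
  mul_assoc _ _ _ := rfl
  one_mul _ := rfl
  mul_one _ := rfl
  inv_mul_cancel := AddEquiv.self_trans_symm

lemma addAutZ2_mul_apply (e₁ e₂ : AddAut (ℤ × ℤ)) (m : ℤ × ℤ) : (e₁ * e₂) m = e₁ (e₂ m) := rfl

@[simp]
lemma addAutZ2_one_apply (m : ℤ × ℤ) : (1 : AddAut (ℤ × ℤ)) m = m := rfl

lemma toMult_apply (f : (ℤ × ℤ) ≃+ (ℤ × ℤ)) (p : ℤ × ℤ) :
    (AddEquiv.toMultiplicative f) (ofAdd p) = ofAdd (f p) := rfl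

lemma toMult_inv_apply (f : (ℤ × ℤ) ≃+ (ℤ × ℤ)) (p : ℤ × ℤ) :
    ((AddEquiv.toMultiplicative f : MulAut A2)⁻¹) (ofAdd p) = ofAdd (f.symm p) := rfl

lemma toMult_zpow (f : (ℤ × ℤ) ≃+ (ℤ × ℤ)) (t : ℤ) :
    ∀ p : ℤ × ℤ, ((AddEquiv.toMultiplicative f) ^ t : MulAut A2) (ofAdd p)
      = ofAdd (((f : AddAut (ℤ × ℤ)) ^ t) p) := by
  induction t using Int.induction_on with
  | zero => intro p; simp
  | succ t ih =>
      intro p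
      rw [zpow_add_one, zpow_add_one, MulAut.mul_apply, addAutZ2_mul_apply]
      exact ih (f p)
  | pred t ih =>
      intro p
      rw [zpow_sub_one, zpow_sub_one, MulAut.mul_apply, addAutZ2_mul_apply]
      exact ih (f.symm p)

/-- Conjugation of an `inl` element by anything in `PiG5` only depends on the
`ℤ`-component. -/
lemma conj_inl (g : PiG5) (x : A2) :
    g * inl x * g⁻¹ = inl (phiG5 g.right x) := by
  have hcomm2 : (inl g.left : PiG5) * inl (phiG5 g.right x) = inl (phiG5 g.right x) * inl g.left := by
    rw [← map_mul, ← map_mul, mul_comm]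
  calc g * inl x * g⁻¹
      = inl g.left * (inr g.right * inl x * inr g.right⁻¹) * (inl g.left)⁻¹ := by
        conv_lhs => rw [← inl_left_mul_inr_right g]
        rw [map_inv]
        group
    _ = inl g.left * inl (phiG5 g.right x) * (inl g.left)⁻¹ := by rw [← inl_aut]
    _ = inl (phiG5 g.right x) := by rw [hcomm2, mul_assoc, mul_inv_cancel, mul_one]

lemma zpow_right (h0 : PiG5) (k : ℤ) (hh0 : rightHom h0 = ofAdd k) (m : ℤ) :
    (h0 ^ m).right = ofAdd (m * k) := by
  have : rightHom (h0 ^ m) = (ofAdd k) ^ m := by rw [map_zpow, hh0]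
  rw [show rightHom (h0 ^ m) = (h0 ^ m).right from rfl] at this
  rw [this, ← ofAdd_zsmul, smul_eq_mul]

lemma conj_inl_zpow (h0 : PiG5) (k : ℤ) (hh0 : rightHom h0 = ofAdd k) (m : ℤ) (x : A2) :
    h0 ^ m * inl x * (h0 ^ m)⁻¹ = inl (phiG5 (ofAdd (m * k)) x) := by
  rw [conj_inl (h0 ^ m) x, zpow_right h0 k hh0 m]

lemma phiG5_apply (t : ℤ) (p : ℤ × ℤ) :
    phiG5 (ofAdd t) (ofAdd p) = ofAdd (((ellG5 : AddAut (ℤ × ℤ)) ^ t) p) := by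
  rw [phiG5, zpowersHom_apply, toAdd_ofAdd, toMult_zpow]

theorem builder (H : Subgroup PiG5) (k : ℤ) (hk : k ≠ 0)
    (h0 : PiG5) (h0H : h0 ∈ H) (hh0 : rightHom h0 = ofAdd k)
    (hpi : ∀ h ∈ H, ∃ m : ℤ, toAdd (rightHom h) = m * k)
    (j : (ℤ × ℤ) →+ (ℤ × ℤ)) (hjinj : Function.Injective j)
    (hjmem : ∀ z, inl (ofAdd (j z)) ∈ H)
    (hjsurj : ∀ a : ℤ × ℤ, inl (ofAdd a) ∈ H → ∃ z, j z = a)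
    (f : (ℤ × ℤ) ≃+ (ℤ × ℤ)) (ε : ℤ) (hε : ε = 1 ∨ ε = -1)
    (hcomm : ∀ z, phiG5 (ofAdd (ε * k)) (ofAdd (j z)) = ofAdd (j (f z))) :
    Nonempty (H ≃*
      (Multiplicative (ℤ × ℤ) ⋊[zpowersHom _ (AddEquiv.toMultiplicative f)] Multiplicative ℤ)) := by
  have hε2 : ∀ m : ℤ, ε * (ε * m) = m := by rcases hε with h | h <;> (intro m; rw [h]; ring)
  have hεk : ε * k ≠ 0 := by rcases hε with h | h <;> (rw [h]; simpa using hk)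
  -- extend `hcomm` to all powers
  have hcomm' : ∀ z, phiG5 (ofAdd (-(ε * k))) (ofAdd (j (f z))) = ofAdd (j z) := by
    intro z
    have := congrArg (phiG5 (ofAdd (-(ε * k)))) (hcomm z)
    rw [← MulAut.mul_apply, ← map_mul, ← ofAdd_add, neg_add_cancel] at this
    rw [← this]
    simp
  have hcommPow : ∀ (t : ℤ) (z : ℤ × ℤ), phiG5 (ofAdd (ε * k * t)) (ofAdd (j z))
      = ofAdd (j (((f : AddAut (ℤ × ℤ)) ^ t) z)) := by
    intro t
    induction t using Int.induction_on with
    | zero => intro z; simp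
    | succ t ih =>
        intro z
        have hsplit : (ε * k * ((t : ℤ) + 1)) = ε * k * (t : ℤ) + ε * k := by ring
        rw [hsplit, ofAdd_add, map_mul, MulAut.mul_apply, hcomm z, ih (f z),
          zpow_add_one, addAutZ2_mul_apply]
    | pred t ih =>
        intro z
        have hsplit : (ε * k * (-(t : ℤ) - 1)) = ε * k * (-(t : ℤ)) + (-(ε * k)) := by ring
        have hz : ofAdd (j z) = ofAdd (j (f (f.symm z))) := by rw [f.apply_symm_apply]
        rw [hsplit, ofAdd_add, map_mul, MulAut.mul_apply, hz, hcomm' (f.symm z),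
          ih (f.symm z), zpow_sub_one, addAutZ2_mul_apply]
        rfl
  set T := Multiplicative (ℤ × ℤ) ⋊[zpowersHom _ (AddEquiv.toMultiplicative f)] Multiplicative ℤ
    with hT
  have swap : ∀ (t : ℤ) (b : ℤ × ℤ),
      h0 ^ (ε * t) * inl (ofAdd (j b)) =
        inl (ofAdd (j (((f : AddAut (ℤ × ℤ)) ^ t) b))) * h0 ^ (ε * t) := by
    intro t b
    have h1 := conj_inl_zpow h0 k hh0 (ε * t) (ofAdd (j b))
    have h2 : (ε * t) * k = ε * k * t := by ring
    rw [h2, hcommPow t b] at h1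
    calc h0 ^ (ε * t) * inl (ofAdd (j b))
        = h0 ^ (ε * t) * inl (ofAdd (j b)) * (h0 ^ (ε * t))⁻¹ * h0 ^ (ε * t) := by group
      _ = _ := by rw [h1]
  let Φf : T → PiG5 := fun g => inl (ofAdd (j (toAdd g.left))) * h0 ^ (ε * toAdd g.right)
  have hmul : ∀ g h : T, Φf (g * h) = Φf g * Φf h := by
    intro g h
    show inl (ofAdd (j (toAdd ((g * h).left)))) * h0 ^ (ε * toAdd ((g * h).right)) = _
    rw [mul_left, mul_right]
    have hleft : toAdd (g.left * (zpowersHom _ (AddEquiv.toMultiplicative f)) g.right h.left)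
        = toAdd g.left + ((f : AddAut (ℤ × ℤ)) ^ (toAdd g.right)) (toAdd h.left) := by
      rw [toAdd_mul]
      congr 1
      rw [zpowersHom_apply, ← ofAdd_toAdd h.left, toMult_zpow, toAdd_ofAdd, toAdd_ofAdd]
    rw [hleft]
    show _ = inl (ofAdd (j (toAdd g.left))) * h0 ^ (ε * toAdd g.right) *
      (inl (ofAdd (j (toAdd h.left))) * h0 ^ (ε * toAdd h.right))
    rw [map_add, ofAdd_add, map_mul]
    calc inl (ofAdd (j (toAdd g.left))) * inl (ofAdd (j (((f : AddAut (ℤ × ℤ)) ^ toAdd g.right) (toAdd h.left))))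
          * h0 ^ (ε * toAdd (g.right * h.right))
        = inl (ofAdd (j (toAdd g.left))) *
            (inl (ofAdd (j (((f : AddAut (ℤ × ℤ)) ^ toAdd g.right) (toAdd h.left)))) * h0 ^ (ε * toAdd g.right))
            * h0 ^ (ε * toAdd h.right) := by
          rw [toAdd_mul, mul_add]
          group
      _ = inl (ofAdd (j (toAdd g.left))) * (h0 ^ (ε * toAdd g.right) * inl (ofAdd (j (toAdd h.left))))
            * h0 ^ (ε * toAdd h.right) := by rw [← swap]
      _ = _ := by group
  let Φ : T →* PiG5 := MonoidHom.mk' Φf hmul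
  have hΦmem : ∀ g : T, Φ g ∈ H := fun g => H.mul_mem (hjmem _) (H.zpow_mem h0H _)
  let Ψ : T →* H := Φ.codRestrict H hΦmem
  have hinj : Function.Injective Ψ := by
    intro g g' hgg
    have h' : Φf g = Φf g' := congrArg Subtype.val hgg
    have hr := congrArg rightHom h'
    simp only [Φf, map_mul, rightHom_inl, one_mul, map_zpow, hh0, ← ofAdd_zsmul,
      smul_eq_mul] at hr
    have hteq : ε * toAdd g.right * k = ε * toAdd g'.right * k := by
      have := congrArg toAdd hr
      simpa using this
    have ht : toAdd g.right = toAdd g'.right := by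
      have h1 : ε * toAdd g.right = ε * toAdd g'.right :=
        mul_right_cancel₀ hk hteq
      rcases hε with h | h <;> (rw [h] at h1; omega)
    have hl : (inl (ofAdd (j (toAdd g.left))) : PiG5) = inl (ofAdd (j (toAdd g'.left))) := by
      have : Φf g * (h0 ^ (ε * toAdd g.right))⁻¹ = Φf g' * (h0 ^ (ε * toAdd g'.right))⁻¹ := by
        rw [h', ht]
      simpa only [Φf, mul_inv_cancel_right, ht] using this
    have hj' := hjinj (Multiplicative.ofAdd.injective (inl_injective hl))
    ext : 1
    · rw [← ofAdd_toAdd g.left, ← ofAdd_toAdd g'.left, hj']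
    · rw [← ofAdd_toAdd g.right, ← ofAdd_toAdd g'.right, ht]
  have hsurj : Function.Surjective Ψ := by
    rintro ⟨h, hh⟩
    obtain ⟨m, hm⟩ := hpi h hh
    have hx : h * (h0 ^ m)⁻¹ ∈ H := H.mul_mem hh (H.inv_mem (H.zpow_mem h0H m))
    have hxr : (h * (h0 ^ m)⁻¹).right = 1 := by
      have : rightHom (h * (h0 ^ m)⁻¹) = 1 := by
        rw [map_mul, map_inv, map_zpow, hh0, ← ofAdd_zsmul, smul_eq_mul,
          show rightHom h = ofAdd (toAdd (rightHom h)) from (ofAdd_toAdd _).symm, hm]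
        simp
      rw [← this]; rfl
    have hxeq : h * (h0 ^ m)⁻¹ = inl ((h * (h0 ^ m)⁻¹).left) := by
      conv_lhs => rw [← inl_left_mul_inr_right (h * (h0 ^ m)⁻¹)]
      rw [hxr, map_one, mul_one]
    obtain ⟨z, hz⟩ := hjsurj (toAdd ((h * (h0 ^ m)⁻¹).left)) (by
      rw [ofAdd_toAdd, ← hxeq]; exact hx)
    refine ⟨⟨ofAdd z, ofAdd (ε * m)⟩, ?_⟩
    apply Subtype.ext
    show Φf ⟨ofAdd z, ofAdd (ε * m)⟩ = h
    show inl (ofAdd (j (toAdd (ofAdd z)))) * h0 ^ (ε * toAdd (ofAdd (ε * m))) = h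
    rw [toAdd_ofAdd, toAdd_ofAdd, hz, hε2 m, ofAdd_toAdd, ← hxeq]
    group
  exact ⟨(MulEquiv.ofBijective Ψ ⟨hinj, hsurj⟩).symm⟩

end Stmt5Aux

-- Stage C: structure theorem
namespace Stmt5Aux
open Eis SemidirectProduct Multiplicative

lemma F5_apply (p : ℤ × ℤ) : (ellG5 : AddAut (ℤ × ℤ)) p = (p.1 - p.2, p.1) := rfl

lemma ellG5_emul (p : ℤ × ℤ) : ellG5 p = emul (1, 1) p := by
  show (p.1 - p.2, p.1) = _
  simp only [emul, Prod.ext_iff]; constructor <;> ring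

lemma ellG3_emul (p : ℤ × ℤ) : ellG3 p = emul (0, 1) p := by
  show (-p.2, p.1 - p.2) = _
  simp only [emul, Prod.ext_iff]; constructor <;> ring

lemma ellG2_neg (p : ℤ × ℤ) : ellG2 p = -p := rfl

lemma F5_pow6 : ((ellG5 : AddAut (ℤ × ℤ)) ^ (6 : ℕ)) = 1 := by
  apply DFunLike.ext
  intro p
  show ((ellG5 : AddAut (ℤ × ℤ)) ^ (6 : ℕ)) p = p
  simp only [pow_succ, pow_zero, one_mul, addAutZ2_mul_apply, F5_apply]
  apply Prod.ext <;> (show _ = _ ; simp) <;> omega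

lemma F5_zpow_eq (t : ℤ) :
    ((ellG5 : AddAut (ℤ × ℤ)) ^ t) = (ellG5 : AddAut (ℤ × ℤ)) ^ (t % 6) := by
  conv_lhs => rw [← Int.mul_ediv_add_emod t 6]
  rw [zpow_add, zpow_mul]
  rw [show ((6 : ℤ)) = ((6 : ℕ) : ℤ) from rfl, zpow_natCast, F5_pow6, one_zpow, one_mul]

lemma F5_zpow_apply_zpow (s t : ℤ) (p : ℤ × ℤ) :
    ((ellG5 : AddAut (ℤ × ℤ)) ^ s) (((ellG5 : AddAut (ℤ × ℤ)) ^ t) p)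
      = ((ellG5 : AddAut (ℤ × ℤ)) ^ (s + t)) p := by
  rw [zpow_add, addAutZ2_mul_apply]

lemma F5_zpow2 (p : ℤ × ℤ) : ((ellG5 : AddAut (ℤ × ℤ)) ^ (2 : ℤ)) p = ellG3 p := by
  rw [show (2 : ℤ) = ((2 : ℕ) : ℤ) from rfl, zpow_natCast]
  simp only [pow_succ, pow_zero, one_mul, addAutZ2_mul_apply, F5_apply]
  show _ = (-p.2, p.1 - p.2)
  apply Prod.ext <;> (show _ = _ ; simp) <;> omega

lemma F5_zpow3 (p : ℤ × ℤ) : ((ellG5 : AddAut (ℤ × ℤ)) ^ (3 : ℤ)) p = -p := by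
  rw [show (3 : ℤ) = ((3 : ℕ) : ℤ) from rfl, zpow_natCast]
  simp only [pow_succ, pow_zero, one_mul, addAutZ2_mul_apply, F5_apply]
  apply Prod.ext <;> (show _ = _ ; simp) <;> omega

/-- From a finite-index subgroup of `ℤ²`, get an injective `AddMonoidHom` with image the
subgroup. -/
lemma exists_j_of_fullrank (L : AddSubgroup (ℤ × ℤ)) (N : ℕ) (hN : 0 < N)
    (hfin : ∀ p : ℤ × ℤ, ((N : ℤ)) • p ∈ L) :
    ∃ j : (ℤ × ℤ) →+ (ℤ × ℤ), Function.Injective j ∧ (∀ z, j z ∈ L) ∧ ∀ a ∈ L, ∃ z, j z = a := by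
  set L' : Submodule ℤ (ℤ × ℤ) := AddSubgroup.toIntSubmodule L with hL'
  have hmem : ∀ x : ℤ × ℤ, x ∈ L' ↔ x ∈ L := fun x => Iff.rfl
  let b : Module.Basis (Unit ⊕ Unit) ℤ (ℤ × ℤ) := (Module.Basis.singleton Unit ℤ).prod (Module.Basis.singleton Unit ℤ)
  obtain ⟨m, bL⟩ := Submodule.basisOfPid b L'
  have hrank2 : Module.rank ℤ (ℤ × ℤ) = 2 := by
    rw [rank_eq_card_basis b]; simp
  have hrankL : Module.rank ℤ L' = m := by rw [rank_eq_card_basis bL]; simp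
  have hle : Module.rank ℤ L' ≤ 2 := hrank2 ▸ Submodule.rank_le L'
  let φ : (ℤ × ℤ) →ₗ[ℤ] L' := LinearMap.codRestrict L' ((N : ℤ) • LinearMap.id)
    (fun p => (hmem _).mpr (hfin p))
  have hφinj : Function.Injective φ := by
    intro x y hxy
    have h1 : (N : ℤ) • x = (N : ℤ) • y := congrArg Subtype.val hxy
    exact smul_right_injective _ (by exact_mod_cast hN.ne') h1
  have hge : Module.rank ℤ (ℤ × ℤ) ≤ Module.rank ℤ L' := LinearMap.rank_le_of_injective φ hφinj
  have hm2 : m = 2 := by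
    have h1 : (m : Cardinal) ≤ 2 := hrankL ▸ hle
    have h2 : (2 : Cardinal) ≤ m := hrankL ▸ (hrank2 ▸ hge)
    have : (m : Cardinal) = ((2 : ℕ) : Cardinal) := by
      rw [Nat.cast_ofNat]; exact le_antisymm h1 h2
    exact_mod_cast this
  have hcard : Fintype.card (Unit ⊕ Unit) = Fintype.card (Fin m) := by simp [hm2]
  let e : (ℤ × ℤ) ≃ₗ[ℤ] L' := b.equiv bL (Fintype.equivOfCardEq hcard)
  refine ⟨(L'.subtype.comp e.toLinearMap).toAddMonoidHom, ?_, ?_, ?_⟩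
  · intro x y hxy
    exact e.injective (Subtype.ext hxy)
  · intro z
    exact (hmem _).mp (e z).2
  · intro a haL
    exact ⟨e.symm ⟨a, (hmem a).mpr haL⟩, by simp⟩

/-- The semidirect product with trivial action is `ℤ³`. -/
def trivEquivZ3 :
    (Multiplicative (ℤ × ℤ) ⋊[zpowersHom _ (AddEquiv.toMultiplicative (AddEquiv.refl (ℤ × ℤ)))]
      Multiplicative ℤ) ≃* Z3 where
  toFun g := ofAdd ((toAdd g.left).1, (toAdd g.left).2, toAdd g.right)
  invFun w := ⟨ofAdd ((toAdd w).1, (toAdd w).2.1), ofAdd (toAdd w).2.2⟩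
  left_inv g := rfl
  right_inv w := rfl
  map_mul' g h := by
    have hrefl : ∀ (t : ℤ) (x : ℤ × ℤ), (((AddEquiv.refl (ℤ × ℤ) : AddAut (ℤ × ℤ))) ^ t) x = x := by
      intro t x
      have h1 : (((AddEquiv.refl (ℤ × ℤ) : AddAut (ℤ × ℤ))) ^ t) = 1 := by
        rw [show ((AddEquiv.refl (ℤ × ℤ) : AddAut (ℤ × ℤ))) = 1 from rfl, one_zpow]
      rw [h1]; rfl
    have htriv : (zpowersHom _ (AddEquiv.toMultiplicative (AddEquiv.refl (ℤ × ℤ)))) g.right h.left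
        = h.left := by
      rw [zpowersHom_apply, ← ofAdd_toAdd h.left, toMult_zpow, hrefl, ofAdd_toAdd]
    show ofAdd _ = ofAdd _ * ofAdd _
    rw [mul_left, mul_right, htriv, ← ofAdd_add]
    rfl

theorem classify (n : ℕ) (hn : 0 < n) (H : Subgroup PiG5) (hH : H.index = n) :
    Nonempty (H ≃* PiG5) ∨ Nonempty (H ≃* PiG3) ∨ Nonempty (H ≃* PiG2) ∨ Nonempty (H ≃* Z3) := by
  classical
  have hidx : H.index ≠ 0 := by rw [hH]; omega
  -- the image of H in ℤ
  let Sa : AddSubgroup ℤ :=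
    { carrier := {t : ℤ | ∃ h ∈ H, rightHom h = Multiplicative.ofAdd t}
      zero_mem' := ⟨1, H.one_mem, by simp⟩
      add_mem' := by
        rintro a b ⟨x, hx, hxr⟩ ⟨y, hy, hyr⟩
        exact ⟨x * y, H.mul_mem hx hy, by rw [map_mul, hxr, hyr, ← ofAdd_add]⟩
      neg_mem' := by
        rintro a ⟨x, hx, hxr⟩
        exact ⟨x⁻¹, H.inv_mem hx, by rw [map_inv, hxr, ← ofAdd_neg]⟩ }
  have hself : ∀ h ∈ H, (toAdd (rightHom h)) ∈ Sa := fun h hh => ⟨h, hh, (ofAdd_toAdd _).symm⟩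
  obtain ⟨a, ha⟩ := Int.subgroup_cyclic Sa
  have haS : a ∈ Sa := by
    rw [ha]; exact AddSubgroup.mem_closure_singleton.mpr ⟨1, one_smul _ _⟩
  have hSmem : ∀ t ∈ Sa, ∃ m : ℤ, t = m * a := by
    intro t ht
    rw [ha] at ht
    obtain ⟨m, hm⟩ := AddSubgroup.mem_closure_singleton.mp ht
    exact ⟨m, by rw [← hm, smul_eq_mul]⟩
  have hane : a ≠ 0 := by
    rintro rfl
    have hker : H ≤ (rightHom : PiG5 →* Multiplicative ℤ).ker := by
      intro h hh
      obtain ⟨m, hm⟩ := hSmem _ (hself h hh)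
      rw [MonoidHom.mem_ker, ← ofAdd_toAdd (rightHom h), hm, mul_zero]
      rfl
    have hdvd : (MonoidHom.ker (rightHom : PiG5 →* Multiplicative ℤ)).index ∣ H.index :=
      Subgroup.index_dvd_of_le hker
    rw [Subgroup.index_ker] at hdvd
    have hinj : Function.Injective
        (fun t : ℤ => (⟨Multiplicative.ofAdd t, ⟨inr (ofAdd t), rightHom_inr _⟩⟩ :
          (rightHom : PiG5 →* Multiplicative ℤ).range)) := by
      intro s t hst
      have := congrArg (fun x => toAdd (Subtype.val x)) hst
      simpa using this
    have : Infinite ((rightHom : PiG5 →* Multiplicative ℤ).range) := Infinite.of_injective _ hinj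
    rw [Nat.card_eq_zero_of_infinite, hH] at hdvd
    omega
  -- normalize the generator to be positive
  obtain ⟨k, hkpos, hk0, hpi⟩ :
      ∃ k : ℤ, 0 < k ∧ (∃ h0 ∈ H, rightHom h0 = ofAdd k) ∧
        ∀ h ∈ H, ∃ m : ℤ, toAdd (rightHom h) = m * k := by
    rcases lt_or_gt_of_ne hane with hneg | hpos
    · obtain ⟨x, hx, hxr⟩ := Sa.neg_mem haS
      refine ⟨-a, by omega, ⟨x, hx, hxr⟩, ?_⟩
      intro h hh
      obtain ⟨m, hm⟩ := hSmem _ (hself h hh)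
      exact ⟨-m, by rw [hm]; ring⟩
    · obtain ⟨x, hx, hxr⟩ := haS
      exact ⟨a, hpos, ⟨x, hx, hxr⟩, fun h hh => hSmem _ (hself h hh)⟩
  obtain ⟨h0, h0H, hh0⟩ := hk0
  have hk : k ≠ 0 := ne_of_gt hkpos
  -- the lattice of H
  let L : AddSubgroup (ℤ × ℤ) :=
    { carrier := {p : ℤ × ℤ | (inl (Multiplicative.ofAdd p) : PiG5) ∈ H}
      zero_mem' := by
        show (inl (Multiplicative.ofAdd (0 : ℤ × ℤ)) : PiG5) ∈ H
        rw [show Multiplicative.ofAdd (0 : ℤ × ℤ) = 1 from rfl, map_one]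
        exact H.one_mem
      add_mem' := by
        intro p q hp hq
        have := H.mul_mem hp hq
        rwa [← map_mul, ← ofAdd_add] at this
      neg_mem' := by
        intro p hp
        have := H.inv_mem hp
        rwa [← map_inv, ← ofAdd_neg] at this }
  have hLmem : ∀ p : ℤ × ℤ, p ∈ L ↔ (inl (Multiplicative.ofAdd p) : PiG5) ∈ H := fun p => Iff.rfl
  -- L has finite index
  have hfin : ∀ p : ℤ × ℤ, (n.factorial : ℤ) • p ∈ L := by
    intro p
    have h1 : (inl (ofAdd p) : PiG5) ^ (n.factorial) ∈ H :=
      Subgroup.pow_mem_of_index_ne_zero_of_dvd hidx _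
        (fun m hm hle => Nat.dvd_factorial hm (le_trans hle (le_of_eq hH)))
    rw [← map_pow, ← ofAdd_nsmul, ← natCast_zsmul] at h1
    exact h1
  -- closure of L under the action
  have hLinv : ∀ p ∈ L, ((ellG5 : AddAut (ℤ × ℤ)) ^ k) p ∈ L := by
    intro p hp
    have hmem := H.mul_mem (H.mul_mem h0H ((hLmem p).mp hp)) (H.inv_mem h0H)
    rw [conj_inl h0 (ofAdd p), show h0.right = ofAdd k from hh0, phiG5_apply] at hmem
    exact hmem
  have hLinv' : ∀ p ∈ L, ((ellG5 : AddAut (ℤ × ℤ)) ^ (-k)) p ∈ L := by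
    intro p hp
    have hconj := conj_inl h0⁻¹ (ofAdd p)
    rw [inv_inv] at hconj
    have hmem := H.mul_mem (H.mul_mem (H.inv_mem h0H) ((hLmem p).mp hp)) h0H
    rw [hconj] at hmem
    have hr' : (h0⁻¹ : PiG5).right = ofAdd (-k) := by
      rw [show (h0⁻¹ : PiG5).right = rightHom h0⁻¹ from rfl, map_inv, hh0, ← ofAdd_neg]
    rw [hr', phiG5_apply] at hmem
    exact hmem
  set r : ℤ := k % 6 with hrdef
  have hr06 : 0 ≤ r ∧ r < 6 := ⟨Int.emod_nonneg k (by norm_num), Int.emod_lt_of_pos k (by norm_num)⟩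
  have hLr : ∀ p ∈ L, ((ellG5 : AddAut (ℤ × ℤ)) ^ r) p ∈ L := by
    intro p hp
    have := hLinv p hp
    rwa [F5_zpow_eq k] at this
  -- nonzero element of L
  have hNfac : 0 < n.factorial := Nat.factorial_pos n
  have hx0L : ((n.factorial : ℤ), (0 : ℤ)) ∈ L := by
    have h1 := hfin (1, 0)
    rwa [show (n.factorial : ℤ) • ((1 : ℤ), (0 : ℤ)) = ((n.factorial : ℤ), (0 : ℤ)) from by
      rw [Prod.smul_mk]; simp] at h1
  have hx0ne : ((n.factorial : ℤ), (0 : ℤ)) ≠ 0 := by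
    simp [Prod.ext_iff, Nat.factorial_ne_zero]
  -- Eisenstein package, valid whenever L is closed under multiplication by ζ
  have eisj : (∀ p ∈ L, ((ellG5 : AddAut (ℤ × ℤ)) ^ (2 : ℤ)) p ∈ L) →
      ∃ j : (ℤ × ℤ) →+ (ℤ × ℤ), Function.Injective j ∧ (∀ z, (inl (ofAdd (j z)) : PiG5) ∈ H) ∧
        (∀ a : ℤ × ℤ, (inl (ofAdd a) : PiG5) ∈ H → ∃ z, j z = a) ∧
        (∀ z, j (ellG5 z) = ellG5 (j z)) ∧ (∀ z, j (ellG3 z) = ellG3 (j z)) := by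
    intro hF2
    have hζ : ∀ x ∈ L, emul (0, 1) x ∈ L := by
      intro x hx
      have := hF2 x hx
      rwa [F5_zpow2, ellG3_emul] at this
    obtain ⟨α, hαL, hαne, hαgen⟩ := exists_gen L hζ hx0L hx0ne
    refine ⟨{ toFun := fun z => emul z α, map_zero' := ?_, map_add' := ?_ }, ?_, ?_, ?_, ?_, ?_⟩
    · show emul 0 α = 0
      simp [emul]
    · intro x y; exact add_emul x y α
    · intro x y hxy
      have hxy' : emul x α = emul y α := hxy
      have h0' : emul (x - y) α = 0 := by rw [sub_emul, hxy', sub_self]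
      have h1 : Eis.enorm (x - y) * Eis.enorm α = 0 := by
        rw [← enorm_mul, h0']
        simp [Eis.enorm]
      have h2 : Eis.enorm (x - y) = 0 := by
        rcases mul_eq_zero.mp h1 with hcase | hcase
        · exact hcase
        · exact absurd hcase (ne_of_gt (enorm_pos hαne))
      exact sub_eq_zero.mp (enorm_eq_zero.mp h2)
    · intro z; exact (hLmem _).mp (emul_mem L hζ z hαL)
    · intro a haH; exact hαgen a ((hLmem a).mpr haH)
    · intro z
      show emul (ellG5 z) α = ellG5 (emul z α)
      rw [ellG5_emul z, ellG5_emul (emul z α), emul_assoc]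
    · intro z
      show emul (ellG3 z) α = ellG3 (emul z α)
      rw [ellG3_emul z, ellG3_emul (emul z α), emul_assoc]
  have hcases : r = 0 ∨ r = 1 ∨ r = 2 ∨ r = 3 ∨ r = 4 ∨ r = 5 := by omega
  rcases hcases with h | h | h | h | h | h
  · -- r = 0 : ℤ³
    obtain ⟨j, hjinj, hjmem', hjsurj'⟩ := exists_j_of_fullrank L (n.factorial) hNfac hfin
    have hjmem : ∀ z, (inl (ofAdd (j z)) : PiG5) ∈ H := fun z => (hLmem _).mp (hjmem' z)
    have hjsurj : ∀ a : ℤ × ℤ, (inl (ofAdd a) : PiG5) ∈ H → ∃ z, j z = a :=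
      fun a haH => hjsurj' a ((hLmem a).mpr haH)
    have hcomm : ∀ z, phiG5 (ofAdd (1 * k)) (ofAdd (j z))
        = ofAdd (j ((AddEquiv.refl (ℤ × ℤ)) z)) := by
      intro z
      rw [phiG5_apply, one_mul, F5_zpow_eq k, ← hrdef, h, zpow_zero]
      rfl
    obtain ⟨e⟩ := builder H k hk h0 h0H hh0 hpi j hjinj hjmem hjsurj
      (AddEquiv.refl _) 1 (Or.inl rfl) hcomm
    exact Or.inr (Or.inr (Or.inr ⟨e.trans trivEquivZ3⟩))
  · -- r = 1 : π₁(G₅)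
    have hF1 : ∀ p ∈ L, ((ellG5 : AddAut (ℤ × ℤ)) ^ (1 : ℤ)) p ∈ L := by
      intro p hp
      have := hLr p hp
      rwa [h] at this
    have hF2 : ∀ p ∈ L, ((ellG5 : AddAut (ℤ × ℤ)) ^ (2 : ℤ)) p ∈ L := by
      intro p hp
      have h2 := hF1 _ (hF1 p hp)
      rwa [F5_zpow_apply_zpow, show (1 + 1 : ℤ) = 2 from rfl] at h2
    obtain ⟨j, hjinj, hjmem, hjsurj, hj5, hj3⟩ := eisj hF2
    have hcomm : ∀ z, phiG5 (ofAdd (1 * k)) (ofAdd (j z)) = ofAdd (j (ellG5 z)) := by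
      intro z
      rw [phiG5_apply, one_mul, F5_zpow_eq k, ← hrdef, h, zpow_one, hj5 z]
    obtain ⟨e⟩ := builder H k hk h0 h0H hh0 hpi j hjinj hjmem hjsurj ellG5 1 (Or.inl rfl) hcomm
    exact Or.inl ⟨e⟩
  · -- r = 2 : π₁(G₃)
    have hF2 : ∀ p ∈ L, ((ellG5 : AddAut (ℤ × ℤ)) ^ (2 : ℤ)) p ∈ L := by
      intro p hp
      have := hLr p hp
      rwa [h] at this
    obtain ⟨j, hjinj, hjmem, hjsurj, hj5, hj3⟩ := eisj hF2
    have hcomm : ∀ z, phiG5 (ofAdd (1 * k)) (ofAdd (j z)) = ofAdd (j (ellG3 z)) := by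
      intro z
      rw [phiG5_apply, one_mul, F5_zpow_eq k, ← hrdef, h, F5_zpow2, hj3 z]
    obtain ⟨e⟩ := builder H k hk h0 h0H hh0 hpi j hjinj hjmem hjsurj ellG3 1 (Or.inl rfl) hcomm
    exact Or.inr (Or.inl ⟨e⟩)
  · -- r = 3 : π₁(G₂)
    obtain ⟨j, hjinj, hjmem', hjsurj'⟩ := exists_j_of_fullrank L (n.factorial) hNfac hfin
    have hjmem : ∀ z, (inl (ofAdd (j z)) : PiG5) ∈ H := fun z => (hLmem _).mp (hjmem' z)
    have hjsurj : ∀ a : ℤ × ℤ, (inl (ofAdd a) : PiG5) ∈ H → ∃ z, j z = a :=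
      fun a haH => hjsurj' a ((hLmem a).mpr haH)
    have hcomm : ∀ z, phiG5 (ofAdd (1 * k)) (ofAdd (j z)) = ofAdd (j (ellG2 z)) := by
      intro z
      rw [phiG5_apply, one_mul, F5_zpow_eq k, ← hrdef, h, F5_zpow3, ellG2_neg, map_neg j z]
    obtain ⟨e⟩ := builder H k hk h0 h0H hh0 hpi j hjinj hjmem hjsurj ellG2 1 (Or.inl rfl) hcomm
    exact Or.inr (Or.inr (Or.inl ⟨e⟩))
  · -- r = 4 : π₁(G₃), with inverted orientation
    have hmod : (-k) % 6 = 2 := by omega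
    have hF4 : ∀ p ∈ L, ((ellG5 : AddAut (ℤ × ℤ)) ^ (4 : ℤ)) p ∈ L := by
      intro p hp
      have := hLr p hp
      rwa [h] at this
    have hF2 : ∀ p ∈ L, ((ellG5 : AddAut (ℤ × ℤ)) ^ (2 : ℤ)) p ∈ L := by
      intro p hp
      have h2 := hF4 _ (hF4 p hp)
      rwa [F5_zpow_apply_zpow, show (4 + 4 : ℤ) = 8 from rfl, F5_zpow_eq 8,
        show (8 : ℤ) % 6 = 2 by norm_num] at h2
    obtain ⟨j, hjinj, hjmem, hjsurj, hj5, hj3⟩ := eisj hF2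
    have hcomm : ∀ z, phiG5 (ofAdd ((-1) * k)) (ofAdd (j z)) = ofAdd (j (ellG3 z)) := by
      intro z
      rw [phiG5_apply, show ((-1 : ℤ)) * k = -k by ring, F5_zpow_eq (-k), hmod, F5_zpow2, hj3 z]
    obtain ⟨e⟩ := builder H k hk h0 h0H hh0 hpi j hjinj hjmem hjsurj ellG3 (-1) (Or.inr rfl) hcomm
    exact Or.inr (Or.inl ⟨e⟩)
  · -- r = 5 : π₁(G₅), with inverted orientation
    have hmod : (-k) % 6 = 1 := by omega
    have hF1 : ∀ p ∈ L, ((ellG5 : AddAut (ℤ × ℤ)) ^ (1 : ℤ)) p ∈ L := by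
      intro p hp
      have := hLinv' p hp
      rwa [F5_zpow_eq (-k), hmod] at this
    have hF2 : ∀ p ∈ L, ((ellG5 : AddAut (ℤ × ℤ)) ^ (2 : ℤ)) p ∈ L := by
      intro p hp
      have h2 := hF1 _ (hF1 p hp)
      rwa [F5_zpow_apply_zpow, show (1 + 1 : ℤ) = 2 from rfl] at h2
    obtain ⟨j, hjinj, hjmem, hjsurj, hj5, hj3⟩ := eisj hF2
    have hcomm : ∀ z, phiG5 (ofAdd ((-1) * k)) (ofAdd (j z)) = ofAdd (j (ellG5 z)) := by
      intro z
      rw [phiG5_apply, show ((-1 : ℤ)) * k = -k by ring, F5_zpow_eq (-k), hmod, zpow_one, hj5 z]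
    obtain ⟨e⟩ := builder H k hk h0 h0H hh0 hpi j hjinj hjmem hjsurj ellG5 (-1) (Or.inr rfl) hcomm
    exact Or.inl ⟨e⟩

end Stmt5Aux

-- Stage D: counting homomorphisms into finite cyclic groups
namespace Stmt5Aux
open SemidirectProduct Multiplicative

section Counting

variable {K : Type} [CommGroup K]

/-- The hom `ℤ² → K` sending the generators to `x`, `y`. -/
def mHom (x y : K) : Multiplicative (ℤ × ℤ) →* K :=
  MonoidHom.mk' (fun a => x ^ (toAdd a).1 * y ^ (toAdd a).2) (by
    intro a b
    show x ^ (toAdd a + toAdd b).1 * y ^ (toAdd a + toAdd b).2 = _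
    rw [Prod.fst_add, Prod.snd_add, zpow_add, zpow_add, mul_mul_mul_comm])

lemma mHom_apply (x y : K) (a : Multiplicative (ℤ × ℤ)) :
    mHom x y a = x ^ (toAdd a).1 * y ^ (toAdd a).2 := rfl

lemma hom_eq_mHom (F : Multiplicative (ℤ × ℤ) →* K) :
    F = mHom (F (ofAdd (1, 0))) (F (ofAdd (0, 1))) := by
  apply MonoidHom.ext
  intro a
  have ha : a = ofAdd (1, 0) ^ (toAdd a).1 * ofAdd (0, 1) ^ (toAdd a).2 := by
    rw [← ofAdd_zsmul, ← ofAdd_zsmul, ← ofAdd_add]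
    rw [show (toAdd a).1 • ((1 : ℤ), (0 : ℤ)) + (toAdd a).2 • ((0 : ℤ), (1 : ℤ)) = toAdd a from by
      rw [Prod.smul_mk, Prod.smul_mk]; simp [Prod.ext_iff]]
    rw [ofAdd_toAdd]
  rw [mHom_apply]
  conv_lhs => rw [ha]
  rw [map_mul, map_zpow, map_zpow]

/-- Homs out of `ℤ²` correspond to pairs of elements. -/
def pairEquiv : (Multiplicative (ℤ × ℤ) →* K) ≃ K × K where
  toFun F := (F (ofAdd (1, 0)), F (ofAdd (0, 1)))
  invFun xy := mHom xy.1 xy.2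
  left_inv F := (hom_eq_mHom F).symm
  right_inv xy := by
    apply Prod.ext <;> simp [mHom_apply]

lemma fix_zpow (σ : MulAut (Multiplicative (ℤ × ℤ))) (F : Multiplicative (ℤ × ℤ) →* K)
    (hfix : ∀ x, F (σ x) = F x) : ∀ (t : ℤ) (x : Multiplicative (ℤ × ℤ)), F ((σ ^ t) x) = F x := by
  have hfix' : ∀ x, F (σ⁻¹ x) = F x := by
    intro x
    have h2 := hfix (σ⁻¹ x)
    have h3 : σ (σ⁻¹ x) = x := by simp
    rw [h3] at h2
    exact h2.symm
  intro t
  induction t using Int.induction_on with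
  | zero => intro x; simp
  | succ t ih =>
      intro x
      rw [zpow_add_one, MulAut.mul_apply, ih (σ x), hfix]
  | pred t ih =>
      intro x
      rw [zpow_sub_one, MulAut.mul_apply, ih (σ⁻¹ x), hfix']

/-- Homs out of the semidirect product `ℤ² ⋊ ℤ` into an abelian group. -/
def semiHomEquiv (σ : MulAut (Multiplicative (ℤ × ℤ))) :
    ((Multiplicative (ℤ × ℤ) ⋊[zpowersHom _ σ] Multiplicative ℤ) →* K) ≃
      {F : Multiplicative (ℤ × ℤ) →* K // ∀ x, F (σ x) = F x} × K where
  toFun Φ :=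
    (⟨Φ.comp inl, by
      intro x
      have hσ : (inl (σ x) : Multiplicative (ℤ × ℤ) ⋊[zpowersHom _ σ] Multiplicative ℤ)
          = inr (ofAdd 1) * inl x * inr (ofAdd 1)⁻¹ := by
        rw [show σ = (zpowersHom _ σ) (ofAdd (1 : ℤ)) from by rw [zpowersHom_apply]; simp]
        exact inl_aut _ _
      show Φ (inl (σ x)) = Φ (inl x)
      rw [hσ, map_mul, map_mul, mul_comm (Φ (inr (ofAdd 1))) (Φ (inl x)), mul_assoc,
        ← map_mul, ← map_mul inr, mul_inv_cancel, map_one, map_one, mul_one]⟩,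
      Φ (inr (ofAdd 1)))
  invFun Fc := SemidirectProduct.lift Fc.1.1 (zpowersHom K Fc.2) (by
    intro g
    apply MonoidHom.ext
    intro y
    show Fc.1.1 ((zpowersHom _ σ) g y) = MulAut.conj ((zpowersHom K Fc.2) g) (Fc.1.1 y)
    rw [MulAut.conj_apply, mul_comm, inv_mul_cancel_left]
    rw [zpowersHom_apply]
    exact fix_zpow σ Fc.1.1 Fc.1.2 (toAdd g) y)
  left_inv Φ := by
    apply SemidirectProduct.hom_ext
    · apply MonoidHom.ext; intro x; simp
    · apply MonoidHom.ext_mint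
      rw [MonoidHom.comp_apply, MonoidHom.comp_apply, lift_inr, zpowersHom_apply]
      show (Φ (inr (ofAdd 1))) ^ toAdd (ofAdd (1 : ℤ)) = Φ (inr (ofAdd 1))
      rw [toAdd_ofAdd, zpow_one]
  right_inv Fc := by
    apply Prod.ext
    · apply Subtype.ext
      apply MonoidHom.ext
      intro x
      simp
    · simp [zpowersHom_apply]

/-- Transfer the fixed-point condition through `pairEquiv`. -/
def fixedEquiv (σ : MulAut (Multiplicative (ℤ × ℤ))) :
    {F : Multiplicative (ℤ × ℤ) →* K // ∀ x, F (σ x) = F x} ≃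
      {p : K × K // mHom p.1 p.2 (σ (ofAdd (1, 0))) = p.1 ∧
        mHom p.1 p.2 (σ (ofAdd (0, 1))) = p.2} := by
  apply Equiv.subtypeEquiv pairEquiv
  intro F
  constructor
  · intro hfix
    constructor
    · show mHom (F (ofAdd (1,0))) (F (ofAdd (0,1))) _ = F (ofAdd (1,0))
      rw [← hom_eq_mHom F]
      exact hfix _
    · show mHom (F (ofAdd (1,0))) (F (ofAdd (0,1))) _ = F (ofAdd (0,1))
      rw [← hom_eq_mHom F]
      exact hfix _
  · rintro ⟨h1, h2⟩ x
    have h1' : F (σ (ofAdd (1, 0))) = F (ofAdd (1, 0)) := by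
      rw [show F (σ (ofAdd (1, 0))) = mHom (F (ofAdd (1,0))) (F (ofAdd (0,1))) (σ (ofAdd (1,0)))
        from by rw [← hom_eq_mHom F]]
      exact h1
    have h2' : F (σ (ofAdd (0, 1))) = F (ofAdd (0, 1)) := by
      rw [show F (σ (ofAdd (0, 1))) = mHom (F (ofAdd (1,0))) (F (ofAdd (0,1))) (σ (ofAdd (0,1)))
        from by rw [← hom_eq_mHom F]]
      exact h2
    have hcomp : F.comp σ.toMonoidHom = F := by
      rw [hom_eq_mHom (F.comp σ.toMonoidHom)]
      conv_rhs => rw [hom_eq_mHom F]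
      simp only [MonoidHom.comp_apply, MulEquiv.coe_toMonoidHom]
      rw [h1', h2']
    have := congrArg (fun (G : Multiplicative (ℤ × ℤ) →* K) => G x) hcomp
    simpa using this

def countEquiv (σ : MulAut (Multiplicative (ℤ × ℤ))) :
    ((Multiplicative (ℤ × ℤ) ⋊[zpowersHom _ σ] Multiplicative ℤ) →* K) ≃
      ({p : K × K // mHom p.1 p.2 (σ (ofAdd (1, 0))) = p.1 ∧
        mHom p.1 p.2 (σ (ofAdd (0, 1))) = p.2} × K) :=
  (semiHomEquiv σ).trans (Equiv.prodCongr (fixedEquiv σ) (Equiv.refl K))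

end Counting

end Stmt5Aux

-- Stage E: concrete counts and non-isomorphism
namespace Stmt5Aux
open SemidirectProduct Multiplicative

/-- Precomposition with a `MulEquiv` gives an equivalence of hom sets. -/
def homCongr {G H : Type} [Group G] [Group H] (e : G ≃* H) (K : Type) [CommGroup K] :
    (G →* K) ≃ (H →* K) where
  toFun F := F.comp e.symm.toMonoidHom
  invFun F := F.comp e.toMonoidHom
  left_inv F := by apply MonoidHom.ext; intro x; simp
  right_inv F := by apply MonoidHom.ext; intro x; simp

lemma count_semi (σ : MulAut (Multiplicative (ℤ × ℤ))) (K : Type) [CommGroup K] :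
    Nat.card ((Multiplicative (ℤ × ℤ) ⋊[zpowersHom _ σ] Multiplicative ℤ) →* K)
      = Nat.card {p : K × K // mHom p.1 p.2 (σ (ofAdd (1, 0))) = p.1 ∧
          mHom p.1 p.2 (σ (ofAdd (0, 1))) = p.2} * Nat.card K := by
  rw [Nat.card_congr (countEquiv σ), Nat.card_prod]

lemma card_Km (m : ℕ) [NeZero m] : Nat.card (Multiplicative (ZMod m)) = m := by
  rw [Nat.card_congr (Multiplicative.toAdd (α := ZMod m)), Nat.card_zmod]

-- counts for PiG5
lemma cnt5 (m : ℕ) [NeZero m] :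
    Nat.card (PiG5 →* Multiplicative (ZMod m)) =
      Nat.card {p : Multiplicative (ZMod m) × Multiplicative (ZMod m) //
        p.1 * p.2 = p.1 ∧ p.1⁻¹ = p.2} * m := by
  rw [show Nat.card (PiG5 →* Multiplicative (ZMod m)) =
      Nat.card ((Multiplicative (ℤ × ℤ) ⋊[zpowersHom _ (AddEquiv.toMultiplicative ellG5)]
        Multiplicative ℤ) →* Multiplicative (ZMod m)) from rfl,
    count_semi, card_Km]
  congr 1
  apply Nat.card_congr
  apply Equiv.subtypeEquiv (Equiv.refl _)
  intro p
  rw [show (AddEquiv.toMultiplicative ellG5) (ofAdd ((1 : ℤ), (0 : ℤ))) = ofAdd (1, 1) from rfl,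
    show (AddEquiv.toMultiplicative ellG5) (ofAdd ((0 : ℤ), (1 : ℤ))) = ofAdd (-1, 0) from rfl,
    mHom_apply, mHom_apply]
  show (p.1 ^ (1 : ℤ) * p.2 ^ (1 : ℤ) = p.1 ∧ p.1 ^ (-1 : ℤ) * p.2 ^ (0 : ℤ) = p.2) ↔ _
  rw [zpow_one, zpow_one, zpow_zero, mul_one, zpow_neg, zpow_one]
  exact Iff.rfl

lemma cnt3 (m : ℕ) [NeZero m] :
    Nat.card (PiG3 →* Multiplicative (ZMod m)) =
      Nat.card {p : Multiplicative (ZMod m) × Multiplicative (ZMod m) //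
        p.2 = p.1 ∧ p.1⁻¹ * p.2⁻¹ = p.2} * m := by
  rw [show Nat.card (PiG3 →* Multiplicative (ZMod m)) =
      Nat.card ((Multiplicative (ℤ × ℤ) ⋊[zpowersHom _ (AddEquiv.toMultiplicative ellG3)]
        Multiplicative ℤ) →* Multiplicative (ZMod m)) from rfl,
    count_semi, card_Km]
  congr 1
  apply Nat.card_congr
  apply Equiv.subtypeEquiv (Equiv.refl _)
  intro p
  rw [show (AddEquiv.toMultiplicative ellG3) (ofAdd ((1 : ℤ), (0 : ℤ))) = ofAdd (0, 1) from rfl,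
    show (AddEquiv.toMultiplicative ellG3) (ofAdd ((0 : ℤ), (1 : ℤ))) = ofAdd (-1, -1) from rfl,
    mHom_apply, mHom_apply]
  show (p.1 ^ (0 : ℤ) * p.2 ^ (1 : ℤ) = p.1 ∧ p.1 ^ (-1 : ℤ) * p.2 ^ (-1 : ℤ) = p.2) ↔ _
  rw [zpow_one, zpow_zero, one_mul, zpow_neg, zpow_neg, zpow_one, zpow_one]
  exact Iff.rfl

lemma cnt2 (m : ℕ) [NeZero m] :
    Nat.card (PiG2 →* Multiplicative (ZMod m)) =
      Nat.card {p : Multiplicative (ZMod m) × Multiplicative (ZMod m) //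
        p.1⁻¹ = p.1 ∧ p.2⁻¹ = p.2} * m := by
  rw [show Nat.card (PiG2 →* Multiplicative (ZMod m)) =
      Nat.card ((Multiplicative (ℤ × ℤ) ⋊[zpowersHom _ (AddEquiv.toMultiplicative ellG2)]
        Multiplicative ℤ) →* Multiplicative (ZMod m)) from rfl,
    count_semi, card_Km]
  congr 1
  apply Nat.card_congr
  apply Equiv.subtypeEquiv (Equiv.refl _)
  intro p
  rw [show (AddEquiv.toMultiplicative ellG2) (ofAdd ((1 : ℤ), (0 : ℤ))) = ofAdd (-1, 0) from rfl,
    show (AddEquiv.toMultiplicative ellG2) (ofAdd ((0 : ℤ), (1 : ℤ))) = ofAdd (0, -1) from rfl,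
    mHom_apply, mHom_apply]
  show (p.1 ^ (-1 : ℤ) * p.2 ^ (0 : ℤ) = p.1 ∧ p.1 ^ (0 : ℤ) * p.2 ^ (-1 : ℤ) = p.2) ↔ _
  rw [zpow_zero, zpow_zero, mul_one, one_mul, zpow_neg, zpow_neg, zpow_one, zpow_one]
  exact Iff.rfl

lemma cntZ3 (m : ℕ) [NeZero m] :
    Nat.card (Z3 →* Multiplicative (ZMod m)) =
      Nat.card {p : Multiplicative (ZMod m) × Multiplicative (ZMod m) //
        p.1 = p.1 ∧ p.2 = p.2} * m := by
  rw [Nat.card_congr (homCongr trivEquivZ3 (Multiplicative (ZMod m))).symm]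
  rw [count_semi, card_Km]
  congr 1
  apply Nat.card_congr
  apply Equiv.subtypeEquiv (Equiv.refl _)
  intro p
  rw [show (AddEquiv.toMultiplicative (AddEquiv.refl (ℤ × ℤ))) (ofAdd ((1 : ℤ), (0 : ℤ)))
      = ofAdd (1, 0) from rfl,
    show (AddEquiv.toMultiplicative (AddEquiv.refl (ℤ × ℤ))) (ofAdd ((0 : ℤ), (1 : ℤ)))
      = ofAdd (0, 1) from rfl,
    mHom_apply, mHom_apply]
  show (p.1 ^ (1 : ℤ) * p.2 ^ (0 : ℤ) = p.1 ∧ p.1 ^ (0 : ℤ) * p.2 ^ (1 : ℤ) = p.2) ↔ _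
  rw [zpow_one, zpow_one, zpow_zero, zpow_zero, mul_one, one_mul]
  exact Iff.rfl

-- numeric evaluations
lemma cnt5_2 : Nat.card (PiG5 →* Multiplicative (ZMod 2)) = 2 := by
  rw [cnt5 2, Nat.card_eq_fintype_card]
  decide

lemma cnt5_3 : Nat.card (PiG5 →* Multiplicative (ZMod 3)) = 3 := by
  rw [cnt5 3, Nat.card_eq_fintype_card]
  decide

lemma cnt3_2 : Nat.card (PiG3 →* Multiplicative (ZMod 2)) = 2 := by
  rw [cnt3 2, Nat.card_eq_fintype_card]
  decide

lemma cnt3_3 : Nat.card (PiG3 →* Multiplicative (ZMod 3)) = 9 := by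
  rw [cnt3 3, Nat.card_eq_fintype_card]
  decide

lemma cnt2_2 : Nat.card (PiG2 →* Multiplicative (ZMod 2)) = 8 := by
  rw [cnt2 2, Nat.card_eq_fintype_card]
  decide

lemma cnt2_3 : Nat.card (PiG2 →* Multiplicative (ZMod 3)) = 3 := by
  rw [cnt2 3, Nat.card_eq_fintype_card]
  decide

lemma cntZ3_2 : Nat.card (Z3 →* Multiplicative (ZMod 2)) = 8 := by
  rw [cntZ3 2, Nat.card_eq_fintype_card]
  decide

lemma cntZ3_3 : Nat.card (Z3 →* Multiplicative (ZMod 3)) = 27 := by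
  rw [cntZ3 3, Nat.card_eq_fintype_card]
  decide

-- non-isomorphism
lemma card_hom_eq_of_iso {G H : Type} [Group G] [Group H] (e : G ≃* H) (K : Type) [CommGroup K] :
    Nat.card (G →* K) = Nat.card (H →* K) := Nat.card_congr (homCongr e K)

lemma no_5_3 : ¬ Nonempty (PiG5 ≃* PiG3) := by
  rintro ⟨e⟩
  have := card_hom_eq_of_iso e (Multiplicative (ZMod 3))
  rw [cnt5_3, cnt3_3] at this
  omega

lemma no_5_2 : ¬ Nonempty (PiG5 ≃* PiG2) := by
  rintro ⟨e⟩
  have := card_hom_eq_of_iso e (Multiplicative (ZMod 2))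
  rw [cnt5_2, cnt2_2] at this
  omega

lemma no_5_Z : ¬ Nonempty (PiG5 ≃* Z3) := by
  rintro ⟨e⟩
  have := card_hom_eq_of_iso e (Multiplicative (ZMod 2))
  rw [cnt5_2, cntZ3_2] at this
  omega

lemma no_3_2 : ¬ Nonempty (PiG3 ≃* PiG2) := by
  rintro ⟨e⟩
  have := card_hom_eq_of_iso e (Multiplicative (ZMod 2))
  rw [cnt3_2, cnt2_2] at this
  omega

lemma no_3_Z : ¬ Nonempty (PiG3 ≃* Z3) := by
  rintro ⟨e⟩
  have := card_hom_eq_of_iso e (Multiplicative (ZMod 2))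
  rw [cnt3_2, cntZ3_2] at this
  omega

lemma no_2_Z : ¬ Nonempty (PiG2 ≃* Z3) := by
  rintro ⟨e⟩
  have := card_hom_eq_of_iso e (Multiplicative (ZMod 3))
  rw [cnt2_3, cntZ3_3] at this
  omega

end Stmt5Aux

/-- every finite-index subgroup of `π₁(G₅)` is isomorphic to exactly one of
`π₁(G₅)`, `π₁(G₃)`, `π₁(G₂)`, `ℤ³`. -/
theorem stmt5 (n : ℕ) (hn : 0 < n) (H : Subgroup PiG5) (hH : H.index = n) :
    (Nonempty (H ≃* PiG5) ∧ ¬Nonempty (H ≃* PiG3) ∧ ¬Nonempty (H ≃* PiG2) ∧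
        ¬Nonempty (H ≃* Z3)) ∨
    (¬Nonempty (H ≃* PiG5) ∧ Nonempty (H ≃* PiG3) ∧ ¬Nonempty (H ≃* PiG2) ∧
        ¬Nonempty (H ≃* Z3)) ∨
    (¬Nonempty (H ≃* PiG5) ∧ ¬Nonempty (H ≃* PiG3) ∧ Nonempty (H ≃* PiG2) ∧
        ¬Nonempty (H ≃* Z3)) ∨
    (¬Nonempty (H ≃* PiG5) ∧ ¬Nonempty (H ≃* PiG3) ∧ ¬Nonempty (H ≃* PiG2) ∧
        Nonempty (H ≃* Z3)) := by
  rcases Stmt5Aux.classify n hn H hH with he | he | he | he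
  · obtain ⟨e⟩ := he
    refine Or.inl ⟨⟨e⟩, ?_, ?_, ?_⟩
    · rintro ⟨e'⟩; exact Stmt5Aux.no_5_3 ⟨e.symm.trans e'⟩
    · rintro ⟨e'⟩; exact Stmt5Aux.no_5_2 ⟨e.symm.trans e'⟩
    · rintro ⟨e'⟩; exact Stmt5Aux.no_5_Z ⟨e.symm.trans e'⟩
  · obtain ⟨e⟩ := he
    refine Or.inr (Or.inl ⟨?_, ⟨e⟩, ?_, ?_⟩)
    · rintro ⟨e'⟩; exact Stmt5Aux.no_5_3 ⟨e'.symm.trans e⟩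
    · rintro ⟨e'⟩; exact Stmt5Aux.no_3_2 ⟨e.symm.trans e'⟩
    · rintro ⟨e'⟩; exact Stmt5Aux.no_3_Z ⟨e.symm.trans e'⟩
  · obtain ⟨e⟩ := he
    refine Or.inr (Or.inr (Or.inl ⟨?_, ?_, ⟨e⟩, ?_⟩))
    · rintro ⟨e'⟩; exact Stmt5Aux.no_5_2 ⟨e'.symm.trans e⟩
    · rintro ⟨e'⟩; exact Stmt5Aux.no_3_2 ⟨e'.symm.trans e⟩
    · rintro ⟨e'⟩; exact Stmt5Aux.no_2_Z ⟨e.symm.trans e'⟩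
  · obtain ⟨e⟩ := he
    refine Or.inr (Or.inr (Or.inr ⟨?_, ?_, ?_, ⟨e⟩⟩))
    · rintro ⟨e'⟩; exact Stmt5Aux.no_5_Z ⟨e'.symm.trans e⟩
    · rintro ⟨e'⟩; exact Stmt5Aux.no_3_Z ⟨e'.symm.trans e⟩
    · rintro ⟨e'⟩; exact Stmt5Aux.no_2_Z ⟨e'.symm.trans e⟩
end
end

section
/- Every subgroup Δ of finite index n in ℤ³ has a triple of generators of the form (a,0,0), (μ,b,0), (ν,λ,c), where a, b, c are positive integers with abc = n, μ, ν are integers with 0 ≤ μ, ν < a, and λ is an integer with 0 ≤ λ < b; distinct such triples generate distinct subgroups, so the subgroups of index n in ℤ³ are in bijection with such triples, and their number is ω(n) = Σ_{k | n} k·σ₁(k). -/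
open scoped Classical

noncomputable section

/-- The Hermite-normal-form subgroup with parameters. -/
def HNF (a b c : ℕ) (μ ν lam : ℤ) : AddSubgroup (ℤ × ℤ × ℤ) where
  carrier := {v | (c:ℤ) ∣ v.2.2 ∧ ((b:ℤ)*c) ∣ ((c:ℤ)*v.2.1 - lam*v.2.2) ∧
    ((a:ℤ)*b*c) ∣ ((b:ℤ)*c*v.1 - μ*((c:ℤ)*v.2.1 - lam*v.2.2) - ν*b*v.2.2)}
  zero_mem' := by simp
  add_mem' := by
    rintro ⟨x1,y1,z1⟩ ⟨x2,y2,z2⟩ ⟨h1,h2,h3⟩ ⟨h1',h2',h3'⟩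
    refine ⟨dvd_add h1 h1', ?_, ?_⟩
    · convert dvd_add h2 h2' using 1; rfl; simp [Prod.ext_iff]; ring
    · convert dvd_add h3 h3' using 1; rfl; simp [Prod.ext_iff]; ring
  neg_mem' := by
    rintro ⟨x,y,z⟩ ⟨h1,h2,h3⟩
    refine ⟨h1.neg_right, ?_, ?_⟩
    · convert h2.neg_right using 1; rfl; simp [Prod.ext_iff]; ring
    · convert h3.neg_right using 1; rfl; simp [Prod.ext_iff]; ring

lemma mem_HNF {a b c : ℕ} {μ ν lam : ℤ} {v : ℤ × ℤ × ℤ} :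
    v ∈ HNF a b c μ ν lam ↔ (c:ℤ) ∣ v.2.2 ∧ ((b:ℤ)*c) ∣ ((c:ℤ)*v.2.1 - lam*v.2.2) ∧
    ((a:ℤ)*b*c) ∣ ((b:ℤ)*c*v.1 - μ*((c:ℤ)*v.2.1 - lam*v.2.2) - ν*b*v.2.2) := Iff.rfl

lemma closure_eq_HNF {a b c : ℕ} {μ ν lam : ℤ} (ha : 0 < a) (hb : 0 < b) (hc : 0 < c) :
    AddSubgroup.closure {((a:ℤ),(0:ℤ),(0:ℤ)), (μ,(b:ℤ),(0:ℤ)), (ν,lam,(c:ℤ))}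
      = HNF a b c μ ν lam := by
  have hb0 : (b:ℤ) ≠ 0 := by exact_mod_cast hb.ne'
  have hc0 : (c:ℤ) ≠ 0 := by exact_mod_cast hc.ne'
  apply le_antisymm
  · rw [AddSubgroup.closure_le]
    rintro v hv
    simp only [Set.mem_insert_iff, Set.mem_singleton_iff] at hv
    rcases hv with rfl | rfl | rfl
    · exact ⟨by simp, ⟨0, by ring⟩, ⟨1, by ring⟩⟩
    · exact ⟨by simp, ⟨1, by ring⟩, ⟨0, by ring⟩⟩
    · exact ⟨dvd_refl _, ⟨0, by ring⟩, ⟨0, by ring⟩⟩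
  · rintro ⟨x, y, z⟩ ⟨h1, h2, h3⟩
    simp only at h1 h2 h3
    obtain ⟨r, hr⟩ := h1
    have h2' : (b:ℤ) ∣ (y - lam * r) := by
      have : (c:ℤ) * b ∣ (c:ℤ) * (y - lam * r) := by
        convert h2 using 1
        · ring
        · rw [hr]; ring
      exact (mul_dvd_mul_iff_left hc0).mp this
    obtain ⟨q, hq⟩ := h2'
    have h3' : (a:ℤ) ∣ (x - μ * q - ν * r) := by
      have : (b:ℤ) * c * a ∣ (b:ℤ) * c * (x - μ * q - ν * r) := by
        convert h3 using 1
        · ring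
        · rw [hr]
          have : (c:ℤ) * y - lam * (c * r) = c * (b * q) := by
            rw [← hq]; ring
          linear_combination (μ : ℤ) * this
      exact (mul_dvd_mul_iff_left (mul_ne_zero hb0 hc0)).mp this
    obtain ⟨p, hp⟩ := h3'
    have hv : ((x, y, z) : ℤ × ℤ × ℤ)
        = p • ((a:ℤ),(0:ℤ),(0:ℤ)) + q • (μ,(b:ℤ),(0:ℤ)) + r • (ν,lam,(c:ℤ)) := by
      simp only [Prod.ext_iff, Prod.smul_fst, Prod.smul_snd, Prod.fst_add, Prod.snd_add,
        smul_eq_mul]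
      refine ⟨by linear_combination hp, by linear_combination hq, by linear_combination hr⟩
    rw [hv]
    have m1 : ((a:ℤ),(0:ℤ),(0:ℤ)) ∈ AddSubgroup.closure
        {((a:ℤ),(0:ℤ),(0:ℤ)), (μ,(b:ℤ),(0:ℤ)), (ν,lam,(c:ℤ))} :=
      AddSubgroup.subset_closure (by simp)
    have m2 : ((μ:ℤ),(b:ℤ),(0:ℤ)) ∈ AddSubgroup.closure
        {((a:ℤ),(0:ℤ),(0:ℤ)), (μ,(b:ℤ),(0:ℤ)), (ν,lam,(c:ℤ))} :=
      AddSubgroup.subset_closure (by simp)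
    have m3 : ((ν:ℤ),lam,(c:ℤ)) ∈ AddSubgroup.closure
        {((a:ℤ),(0:ℤ),(0:ℤ)), (μ,(b:ℤ),(0:ℤ)), (ν,lam,(c:ℤ))} :=
      AddSubgroup.subset_closure (by simp)
    exact add_mem (add_mem (AddSubgroup.zsmul_mem _ m1 p) (AddSubgroup.zsmul_mem _ m2 q))
      (AddSubgroup.zsmul_mem _ m3 r)

private lemma ediv_shift {c t z z' : ℤ} (hc : c ≠ 0) (h : z = z' + c * t) :
    z.ediv c = z'.ediv c + t := by
  rw [h, mul_comm c t]
  exact Int.add_mul_ediv_right z' t hc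

private lemma zmod_cast_eq_iff (m : ℕ) (u w : ℤ) :
    ((u : ZMod m) = w) ↔ (m : ℤ) ∣ u - w := by
  rw [ZMod.intCast_eq_intCast_iff, Int.modEq_iff_dvd, dvd_sub_comm]

/-- The reduction map used to compute the index of `HNF`. -/
def gmap (a b c : ℕ) (μ ν lam : ℤ) (v : ℤ × ℤ × ℤ) : ZMod a × ZMod b × ZMod c :=
  ((((v.1 - μ * ((v.2.1 - lam * (v.2.2.ediv c)).ediv b)
      - ν * (v.2.2.ediv c)) : ℤ) : ZMod a),
   (((v.2.1 - lam * (v.2.2.ediv c)) : ℤ) : ZMod b),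
   ((v.2.2 : ℤ) : ZMod c))

lemma gmap_eq_iff {a b c : ℕ} {μ ν lam : ℤ} (ha : 0 < a) (hb : 0 < b) (hc : 0 < c)
    (v w : ℤ × ℤ × ℤ) :
    gmap a b c μ ν lam v = gmap a b c μ ν lam w ↔ v - w ∈ HNF a b c μ ν lam := by
  have hb0 : (b:ℤ) ≠ 0 := by exact_mod_cast hb.ne'
  have hc0 : (c:ℤ) ≠ 0 := by exact_mod_cast hc.ne'
  obtain ⟨xv, yv, zv⟩ := v
  obtain ⟨xw, yw, zw⟩ := w
  rw [mem_HNF]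
  simp only [gmap, Prod.ext_iff, Prod.fst_sub, Prod.snd_sub, Prod.mk_sub_mk]
  simp only [zmod_cast_eq_iff]
  constructor
  · rintro ⟨h1, h2, h3⟩
    -- from the ZMod c equality
    obtain ⟨t, ht⟩ := h3
    have hrt : zv.ediv c = zw.ediv c + t := ediv_shift hc0 (by linarith)
    refine ⟨⟨t, by linarith⟩, ?_, ?_⟩
    · obtain ⟨s, hs⟩ := h2
      exact ⟨s, by rw [hrt] at hs; linear_combination (c:ℤ) * hs - lam * ht⟩
    · obtain ⟨s, hs⟩ := h2
      have hqs : (yv - lam * zv.ediv c).ediv b = (yw - lam * zw.ediv c).ediv b + s := by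
        apply ediv_shift hb0
        rw [hrt] at hs; linear_combination hs - lam * hrt
      obtain ⟨p, hp⟩ := h1
      rw [hqs, hrt] at hp
      rw [hrt] at hs
      refine ⟨p, ?_⟩
      linear_combination ((b:ℤ)*c) * hp - (μ*(c:ℤ)) * hs + (μ*lam - ν*(b:ℤ)) * ht
  · rintro ⟨h1, h2, h3⟩
    obtain ⟨t, ht⟩ := h1
    have hrt : zv.ediv c = zw.ediv c + t := ediv_shift hc0 (by linarith)
    have h2' : (b:ℤ) ∣ ((yv - lam * zv.ediv c) - (yw - lam * zw.ediv c)) := by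
      have : (c:ℤ) * b ∣ (c:ℤ) * ((yv - lam * zv.ediv c) - (yw - lam * zw.ediv c)) := by
        obtain ⟨s, hs⟩ := h2
        exact ⟨s, by rw [hrt]; linear_combination hs + lam * ht⟩
      exact (mul_dvd_mul_iff_left hc0).mp this
    obtain ⟨s, hs⟩ := h2'
    have hqs : (yv - lam * zv.ediv c).ediv b = (yw - lam * zw.ediv c).ediv b + s := by
      apply ediv_shift hb0; linarith
    have h3' : (a:ℤ) ∣ ((xv - μ * ((yv - lam * zv.ediv c).ediv b) - ν * zv.ediv c)
        - (xw - μ * ((yw - lam * zw.ediv c).ediv b) - ν * zw.ediv c)) := by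
      have : (b:ℤ) * c * a ∣ (b:ℤ) * c * ((xv - μ * ((yv - lam * zv.ediv c).ediv b) - ν * zv.ediv c)
          - (xw - μ * ((yw - lam * zw.ediv c).ediv b) - ν * zw.ediv c)) := by
        obtain ⟨p, hp⟩ := h3
        refine ⟨p, ?_⟩
        rw [hqs, hrt]
        linear_combination hp + μ*(c:ℤ)*hs + (ν*(b:ℤ) - μ*lam)*ht + μ*(c:ℤ)*lam*hrt
      exact (mul_dvd_mul_iff_left (mul_ne_zero hb0 hc0)).mp this
    exact ⟨h3', ⟨s, by linear_combination hs⟩, ⟨t, by linarith⟩⟩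

lemma HNF_index {a b c : ℕ} {μ ν lam : ℤ} (ha : 0 < a) (hb : 0 < b) (hc : 0 < c) :
    (HNF a b c μ ν lam).index = a * b * c := by
  haveI : NeZero a := ⟨ha.ne'⟩
  haveI : NeZero b := ⟨hb.ne'⟩
  haveI : NeZero c := ⟨hc.ne'⟩
  have hresp : ∀ v w : ℤ × ℤ × ℤ,
      (QuotientAddGroup.leftRel (HNF a b c μ ν lam)) v w →
      gmap a b c μ ν lam v = gmap a b c μ ν lam w := by
    intro v w h
    rw [QuotientAddGroup.leftRel_apply] at h
    have : w - v ∈ HNF a b c μ ν lam := by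
      have : -v + w ∈ HNF a b c μ ν lam := h
      rwa [neg_add_eq_sub] at this
    exact ((gmap_eq_iff ha hb hc w v).mpr this).symm
  let F : (ℤ × ℤ × ℤ) ⧸ HNF a b c μ ν lam → ZMod a × ZMod b × ZMod c :=
    fun q => Quotient.liftOn' q (gmap a b c μ ν lam) hresp
  have hbij : Function.Bijective F := by
    constructor
    · intro q1 q2
      refine Quotient.inductionOn₂' q1 q2 (fun v w h => ?_)
      have : v - w ∈ HNF a b c μ ν lam := (gmap_eq_iff ha hb hc v w).mp h
      refine Quotient.sound' ?_
      rw [QuotientAddGroup.leftRel_apply, neg_add_eq_sub]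
      simpa [neg_sub] using (HNF a b c μ ν lam).neg_mem this
    · rintro ⟨α, β, γ⟩
      refine ⟨QuotientAddGroup.mk ((α.val : ℤ), (β.val : ℤ), (γ.val : ℤ)), ?_⟩
      have hr : ((γ.val : ℤ)).ediv c = 0 :=
        Int.ediv_eq_zero_of_lt (by positivity) (by exact_mod_cast ZMod.val_lt γ)
      have hq : ((β.val : ℤ)).ediv b = 0 :=
        Int.ediv_eq_zero_of_lt (by positivity) (by exact_mod_cast ZMod.val_lt β)
      show gmap a b c μ ν lam _ = _
      unfold gmap
      simp only [hr, mul_zero, sub_zero, hq]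
      refine Prod.ext ?_ (Prod.ext ?_ ?_) <;>
        simp [ZMod.natCast_val, ZMod.cast_id]
  rw [AddSubgroup.index, Nat.card_eq_of_bijective F hbij]
  simp [Nat.card_eq_fintype_card, mul_assoc]

private lemma int_subgroup (H : AddSubgroup ℤ) : ∃ m : ℕ, ∀ x : ℤ, x ∈ H ↔ (m:ℤ) ∣ x := by
  obtain ⟨g, hg⟩ := Int.subgroup_cyclic H
  refine ⟨g.natAbs, fun x => ?_⟩
  rw [hg, ← AddSubgroup.zmultiples_eq_closure, Int.mem_zmultiples_iff, Int.natAbs_dvd]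

/-- The subgroup of third coordinates of `Δ`. -/
private def S3 (Δ : AddSubgroup (ℤ × ℤ × ℤ)) : AddSubgroup ℤ where
  carrier := {z | ∃ x y, (x, y, z) ∈ Δ}
  zero_mem' := ⟨0, 0, Δ.zero_mem⟩
  add_mem' := by
    rintro z1 z2 ⟨x1, y1, h1⟩ ⟨x2, y2, h2⟩
    exact ⟨x1 + x2, y1 + y2, by simpa using Δ.add_mem h1 h2⟩
  neg_mem' := by
    rintro z ⟨x, y, h⟩
    exact ⟨-x, -y, by simpa using Δ.neg_mem h⟩

/-- The subgroup of second coordinates of elements of `Δ` with third coordinate `0`. -/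
private def S2 (Δ : AddSubgroup (ℤ × ℤ × ℤ)) : AddSubgroup ℤ where
  carrier := {y | ∃ x, (x, y, 0) ∈ Δ}
  zero_mem' := ⟨0, Δ.zero_mem⟩
  add_mem' := by
    rintro y1 y2 ⟨x1, h1⟩ ⟨x2, h2⟩
    exact ⟨x1 + x2, by simpa using Δ.add_mem h1 h2⟩
  neg_mem' := by
    rintro y ⟨x, h⟩
    exact ⟨-x, by simpa using Δ.neg_mem h⟩

/-- The subgroup of first coordinates of elements of `Δ` of the form `(x,0,0)`. -/
private def S1 (Δ : AddSubgroup (ℤ × ℤ × ℤ)) : AddSubgroup ℤ where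
  carrier := {x | (x, 0, 0) ∈ Δ}
  zero_mem' := Δ.zero_mem
  add_mem' := by
    rintro x1 x2 h1 h2
    simpa using Δ.add_mem h1 h2
  neg_mem' := by
    rintro x h
    simpa using Δ.neg_mem h

lemma exists_HNF {n : ℕ} (hn : 0 < n) (Δ : AddSubgroup (ℤ × ℤ × ℤ)) (hΔ : Δ.index = n) :
    ∃ a b c : ℕ, ∃ μ ν lam : ℤ,
      0 < a ∧ 0 < b ∧ 0 < c ∧ a * b * c = n ∧
      0 ≤ μ ∧ μ < (a : ℤ) ∧ 0 ≤ ν ∧ ν < (a : ℤ) ∧ 0 ≤ lam ∧ lam < (b : ℤ) ∧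
      AddSubgroup.closure
        {((a : ℤ), (0 : ℤ), (0 : ℤ)), (μ, (b : ℤ), (0 : ℤ)), (ν, lam, (c : ℤ))} = Δ := by
  have hnsmul : ∀ v : ℤ × ℤ × ℤ, n • v ∈ Δ := by
    intro v; rw [← hΔ]; exact AddSubgroup.nsmul_index_mem Δ v
  -- the three cyclic subgroups
  obtain ⟨c, hc⟩ := int_subgroup (S3 Δ)
  obtain ⟨b, hb⟩ := int_subgroup (S2 Δ)
  obtain ⟨a, ha⟩ := int_subgroup (S1 Δ)
  have hn0 : (n : ℤ) ≠ 0 := by exact_mod_cast hn.ne'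
  have hcpos : 0 < c := by
    rcases Nat.eq_zero_or_pos c with h | h
    · exfalso
      have : ((n:ℤ) : ℤ) ∈ S3 Δ := ⟨0, 0, by simpa [Prod.ext_iff] using hnsmul (0, 0, 1)⟩
      rw [hc] at this
      simp [h] at this
      exact hn0 (by exact_mod_cast this)
    · exact h
  have hbpos : 0 < b := by
    rcases Nat.eq_zero_or_pos b with h | h
    · exfalso
      have : ((n:ℤ) : ℤ) ∈ S2 Δ := ⟨0, by simpa [Prod.ext_iff] using hnsmul (0, 1, 0)⟩
      rw [hb] at this
      simp [h] at this
      exact hn0 (by exact_mod_cast this)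
    · exact h
  have hapos : 0 < a := by
    rcases Nat.eq_zero_or_pos a with h | h
    · exfalso
      have : ((n:ℤ) : ℤ) ∈ S1 Δ := by
        show ((n:ℤ), (0:ℤ), (0:ℤ)) ∈ Δ
        simpa [Prod.ext_iff] using hnsmul (1, 0, 0)
      rw [ha] at this
      simp [h] at this
      exact hn0 (by exact_mod_cast this)
    · exact h
  have ha0 : (a:ℤ) ≠ 0 := by exact_mod_cast hapos.ne'
  have hb0 : (b:ℤ) ≠ 0 := by exact_mod_cast hbpos.ne'
  have hc0 : (c:ℤ) ≠ 0 := by exact_mod_cast hcpos.ne'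
  -- elements realizing the generators
  have hcmem : (c:ℤ) ∈ S3 Δ := (hc _).mpr dvd_rfl
  obtain ⟨ν₀, l0, h3mem⟩ := hcmem
  have hbmem : (b:ℤ) ∈ S2 Δ := (hb _).mpr dvd_rfl
  obtain ⟨μ₀, h2mem⟩ := hbmem
  have hamem : ((a:ℤ), (0:ℤ), (0:ℤ)) ∈ Δ := (ha _).mpr dvd_rfl
  -- reduce the off-diagonal entries
  set lam := l0 % (b:ℤ) with hlam
  set μ := μ₀ % (a:ℤ) with hμ
  set ν₁ := ν₀ - (l0 / (b:ℤ)) * μ₀ with hν₁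
  set ν := ν₁ % (a:ℤ) with hν
  have g2mem : ((μ:ℤ), (b:ℤ), (0:ℤ)) ∈ Δ := by
    have := Δ.sub_mem h2mem (Δ.zsmul_mem hamem (μ₀ / (a:ℤ)))
    have he : (μ₀, (b:ℤ), (0:ℤ)) - (μ₀ / (a:ℤ)) • ((a:ℤ), (0:ℤ), (0:ℤ))
        = ((μ:ℤ), (b:ℤ), (0:ℤ)) := by
      simp only [Prod.mk_sub_mk, Prod.smul_mk, smul_eq_mul, hμ]
      refine Prod.ext ?_ (by simp)
      simp [Int.emod_def, mul_comm]
    rwa [he] at this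
  have g3mem : ((ν:ℤ), lam, (c:ℤ)) ∈ Δ := by
    have step1 : ((ν₁:ℤ), lam, (c:ℤ)) ∈ Δ := by
      have := Δ.sub_mem h3mem (Δ.zsmul_mem h2mem (l0 / (b:ℤ)))
      have he : (ν₀, l0, (c:ℤ)) - (l0 / (b:ℤ)) • (μ₀, (b:ℤ), (0:ℤ))
          = ((ν₁:ℤ), lam, (c:ℤ)) := by
        simp only [Prod.mk_sub_mk, Prod.smul_mk, smul_eq_mul, hν₁, hlam]
        refine Prod.ext (by ring) (Prod.ext ?_ (by simp))
        simp [Int.emod_def, mul_comm]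
      rwa [he] at this
    have := Δ.sub_mem step1 (Δ.zsmul_mem hamem (ν₁ / (a:ℤ)))
    have he : ((ν₁:ℤ), lam, (c:ℤ)) - (ν₁ / (a:ℤ)) • ((a:ℤ), (0:ℤ), (0:ℤ))
        = ((ν:ℤ), lam, (c:ℤ)) := by
      simp only [Prod.mk_sub_mk, Prod.smul_mk, smul_eq_mul, hν]
      refine Prod.ext ?_ (by simp)
      simp [Int.emod_def, mul_comm]
    rwa [he] at this
  have hcl : AddSubgroup.closure
      {((a : ℤ), (0 : ℤ), (0 : ℤ)), ((μ:ℤ), (b : ℤ), (0 : ℤ)), ((ν:ℤ), lam, (c : ℤ))} = Δ := by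
    apply le_antisymm
    · rw [AddSubgroup.closure_le]
      rintro v hv
      simp only [Set.mem_insert_iff, Set.mem_singleton_iff] at hv
      rcases hv with rfl | rfl | rfl
      · exact hamem
      · exact g2mem
      · exact g3mem
    · rintro ⟨x, y, z⟩ hxyz
      rw [closure_eq_HNF hapos hbpos hcpos, mem_HNF]
      have h1 : (c:ℤ) ∣ z := (hc z).mp ⟨x, y, hxyz⟩
      obtain ⟨r, hr⟩ := h1
      have step : ((x, y, z) : ℤ × ℤ × ℤ) - r • ((ν:ℤ), lam, (c:ℤ)) ∈ Δ :=
        Δ.sub_mem hxyz (Δ.zsmul_mem g3mem r)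
      have hz0 : z - r * (c:ℤ) = 0 := by rw [hr]; ring
      have step' : ((x - r * ν, y - r * lam, (0:ℤ)) : ℤ × ℤ × ℤ) ∈ Δ := by
        have he : ((x, y, z) : ℤ × ℤ × ℤ) - r • ((ν:ℤ), lam, (c:ℤ))
            = (x - r * ν, y - r * lam, (0:ℤ)) := by
          simp only [Prod.mk_sub_mk, Prod.smul_mk, smul_eq_mul]
          simp only [Prod.mk.injEq]
          exact ⟨trivial, trivial, hz0⟩
        rwa [he] at step
      have h2 : (b:ℤ) ∣ (y - r * lam) := (hb _).mp ⟨x - r * ν, step'⟩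
      obtain ⟨q, hq⟩ := h2
      have step2 : ((x - r * ν - q * μ, (0:ℤ), (0:ℤ)) : ℤ × ℤ × ℤ) ∈ Δ := by
        have := Δ.sub_mem step' (Δ.zsmul_mem g2mem q)
        have he : ((x - r * ν, y - r * lam, (0:ℤ)) : ℤ × ℤ × ℤ) - q • ((μ:ℤ), (b:ℤ), (0:ℤ))
            = (x - r * ν - q * μ, (0:ℤ), (0:ℤ)) := by
          simp only [Prod.mk_sub_mk, Prod.smul_mk, smul_eq_mul]
          simp only [Prod.mk.injEq]
          exact ⟨trivial, by linarith, by ring⟩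
        rwa [he] at this
      have h3 : (a:ℤ) ∣ (x - r * ν - q * μ) := (ha _).mp step2
      obtain ⟨p, hp⟩ := h3
      refine ⟨⟨r, hr⟩, ⟨q, by rw [hr]; linear_combination (c:ℤ) * hq⟩, ⟨p, ?_⟩⟩
      rw [hr]
      linear_combination ((b:ℤ)*c) * hp - (μ*(c:ℤ)) * hq
  refine ⟨a, b, c, μ, ν, lam, hapos, hbpos, hcpos, ?_,
    Int.emod_nonneg _ ha0, Int.emod_lt_of_pos _ (by exact_mod_cast hapos),
    Int.emod_nonneg _ ha0, Int.emod_lt_of_pos _ (by exact_mod_cast hapos),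
    Int.emod_nonneg _ hb0, Int.emod_lt_of_pos _ (by exact_mod_cast hbpos), hcl⟩
  rw [← hΔ, ← hcl, closure_eq_HNF hapos hbpos hcpos, HNF_index hapos hbpos hcpos]

private lemma small_dvd_zero {m d : ℤ} (hm : 0 < m) (h : m ∣ d) (h1 : -m < d) (h2 : d < m) :
    d = 0 := by
  obtain ⟨k, rfl⟩ := h
  rcases lt_trichotomy k 0 with hk | rfl | hk
  · nlinarith
  · ring
  · nlinarith

lemma g1_mem_HNF (a b c : ℕ) (μ ν lam : ℤ) : ((a:ℤ), (0:ℤ), (0:ℤ)) ∈ HNF a b c μ ν lam :=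
  ⟨⟨0, by ring⟩, ⟨0, by ring⟩, ⟨1, by ring⟩⟩

lemma g2_mem_HNF (a b c : ℕ) (μ ν lam : ℤ) : ((μ:ℤ), (b:ℤ), (0:ℤ)) ∈ HNF a b c μ ν lam :=
  ⟨⟨0, by ring⟩, ⟨1, by ring⟩, ⟨0, by ring⟩⟩

lemma g3_mem_HNF (a b c : ℕ) (μ ν lam : ℤ) : ((ν:ℤ), lam, (c:ℤ)) ∈ HNF a b c μ ν lam :=
  ⟨⟨1, by ring⟩, ⟨0, by ring⟩, ⟨0, by ring⟩⟩

lemma HNF_unique {a b c a' b' c' : ℕ} {μ ν lam μ' ν' lam' : ℤ}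
    (ha : 0 < a) (hb : 0 < b) (hc : 0 < c) (ha' : 0 < a') (hb' : 0 < b') (hc' : 0 < c')
    (hμ1 : 0 ≤ μ) (hμ2 : μ < (a:ℤ)) (hν1 : 0 ≤ ν) (hν2 : ν < (a:ℤ))
    (hl1 : 0 ≤ lam) (hl2 : lam < (b:ℤ))
    (hμ1' : 0 ≤ μ') (hμ2' : μ' < (a':ℤ)) (hν1' : 0 ≤ ν') (hν2' : ν' < (a':ℤ))
    (hl1' : 0 ≤ lam') (hl2' : lam' < (b':ℤ))
    (h : HNF a b c μ ν lam = HNF a' b' c' μ' ν' lam') :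
    a = a' ∧ b = b' ∧ c = c' ∧ μ = μ' ∧ ν = ν' ∧ lam = lam' := by
  have ha0 : (a:ℤ) ≠ 0 := by exact_mod_cast ha.ne'
  have hb0 : (b:ℤ) ≠ 0 := by exact_mod_cast hb.ne'
  have hc0 : (c:ℤ) ≠ 0 := by exact_mod_cast hc.ne'
  have ha0' : (a':ℤ) ≠ 0 := by exact_mod_cast ha'.ne'
  have hb0' : (b':ℤ) ≠ 0 := by exact_mod_cast hb'.ne'
  have hc0' : (c':ℤ) ≠ 0 := by exact_mod_cast hc'.ne'
  -- memberships in the other subgroup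
  have m1 : ((a:ℤ), (0:ℤ), (0:ℤ)) ∈ HNF a' b' c' μ' ν' lam' := h ▸ g1_mem_HNF a b c μ ν lam
  have m2 : ((μ:ℤ), (b:ℤ), (0:ℤ)) ∈ HNF a' b' c' μ' ν' lam' := h ▸ g2_mem_HNF a b c μ ν lam
  have m3 : ((ν:ℤ), lam, (c:ℤ)) ∈ HNF a' b' c' μ' ν' lam' := h ▸ g3_mem_HNF a b c μ ν lam
  have m1' : ((a':ℤ), (0:ℤ), (0:ℤ)) ∈ HNF a b c μ ν lam := h ▸ g1_mem_HNF a' b' c' μ' ν' lam'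
  have m2' : ((μ':ℤ), (b':ℤ), (0:ℤ)) ∈ HNF a b c μ ν lam := h ▸ g2_mem_HNF a' b' c' μ' ν' lam'
  have m3' : ((ν':ℤ), lam', (c':ℤ)) ∈ HNF a b c μ ν lam := h ▸ g3_mem_HNF a' b' c' μ' ν' lam'
  have hcc : c = c' := by
    have d1 : (c':ℤ) ∣ (c:ℤ) := m3.1
    have d2 : (c:ℤ) ∣ (c':ℤ) := m3'.1
    exact_mod_cast Int.dvd_antisymm (by positivity) (by positivity) d2 d1
  have hbb : b = b' := by
    have d1 : (b':ℤ) ∣ (b:ℤ) := by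
      have := m2.2.1
      have h2 : (c':ℤ) * b' ∣ (c':ℤ) * b := by
        convert this using 1 <;> ring
      exact (mul_dvd_mul_iff_left hc0').mp h2
    have d2 : (b:ℤ) ∣ (b':ℤ) := by
      have := m2'.2.1
      have h2 : (c:ℤ) * b ∣ (c:ℤ) * b' := by
        convert this using 1 <;> ring
      exact (mul_dvd_mul_iff_left hc0).mp h2
    exact_mod_cast Int.dvd_antisymm (by positivity) (by positivity) d2 d1
  have haa : a = a' := by
    have d1 : (a':ℤ) ∣ (a:ℤ) := by
      have := m1.2.2
      have h2 : (b':ℤ) * c' * a' ∣ (b':ℤ) * c' * a := by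
        convert this using 1 <;> ring
      exact (mul_dvd_mul_iff_left (mul_ne_zero hb0' hc0')).mp h2
    have d2 : (a:ℤ) ∣ (a':ℤ) := by
      have := m1'.2.2
      have h2 : (b:ℤ) * c * a ∣ (b:ℤ) * c * a' := by
        convert this using 1 <;> ring
      exact (mul_dvd_mul_iff_left (mul_ne_zero hb0 hc0)).mp h2
    exact_mod_cast Int.dvd_antisymm (by positivity) (by positivity) d2 d1
  subst haa; subst hbb; subst hcc
  have hll : lam = lam' := by
    have := m3.2.1
    have h2 : (b:ℤ) ∣ (lam - lam') := by
      have h3 : (c:ℤ) * b ∣ (c:ℤ) * (lam - lam') := by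
        convert this using 1 <;> ring
      exact (mul_dvd_mul_iff_left hc0).mp h3
    have := small_dvd_zero (show (0:ℤ) < b by positivity) h2 (by linarith) (by linarith)
    linarith
  have hμμ : μ = μ' := by
    have := m2.2.2
    have h2 : (a:ℤ) ∣ (μ - μ') := by
      have h3 : (b:ℤ) * c * a ∣ (b:ℤ) * c * (μ - μ') := by
        convert this using 1 <;> ring
      exact (mul_dvd_mul_iff_left (mul_ne_zero hb0 hc0)).mp h3
    have := small_dvd_zero (show (0:ℤ) < a by positivity) h2 (by linarith) (by linarith)
    linarith
  have hνν : ν = ν' := by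
    have := m3.2.2
    rw [hll] at this
    have h2 : (a:ℤ) ∣ (ν - ν') := by
      have h3 : (b:ℤ) * c * a ∣ (b:ℤ) * c * (ν - ν') := by
        convert this using 1 <;> ring
      exact (mul_dvd_mul_iff_left (mul_ne_zero hb0 hc0)).mp h3
    have := small_dvd_zero (show (0:ℤ) < a by positivity) h2 (by linarith) (by linarith)
    linarith
  exact ⟨rfl, rfl, rfl, hμμ, hνν, hll⟩

/-- Divisor triples of `n`. -/
def DTrip (n : ℕ) := {p : ℕ × ℕ × ℕ // p.1 * p.2.1 * p.2.2 = n}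

/-- HNF parameter tuples for index `n`. -/
def Tset (n : ℕ) := {t : (ℕ × ℕ × ℕ) × (ℤ × ℤ × ℤ) //
  t.1.1 * t.1.2.1 * t.1.2.2 = n ∧ 0 ≤ t.2.1 ∧ t.2.1 < (t.1.1 : ℤ) ∧
  0 ≤ t.2.2.1 ∧ t.2.2.1 < (t.1.1 : ℤ) ∧ 0 ≤ t.2.2.2 ∧ t.2.2.2 < (t.1.2.1 : ℤ)}

def F3 (n : ℕ) : Finset (ℕ × ℕ × ℕ) :=
  Finset.filter (fun p => p.1 * p.2.1 * p.2.2 = n)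
    (Finset.range (n+1) ×ˢ Finset.range (n+1) ×ˢ Finset.range (n+1))

lemma mem_F3 {n : ℕ} (hn : 0 < n) (p : ℕ × ℕ × ℕ) :
    p ∈ F3 n ↔ p.1 * p.2.1 * p.2.2 = n := by
  obtain ⟨a, b, c⟩ := p
  simp only [F3, Finset.mem_filter, Finset.mem_product, Finset.mem_range]
  constructor
  · exact fun h => h.2
  · intro h
    have hda : a ≤ n := Nat.le_of_dvd hn ⟨b * c, by rw [← h]; ring⟩
    have hdb : b ≤ n := Nat.le_of_dvd hn ⟨a * c, by rw [← h]; ring⟩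
    have hdc : c ≤ n := Nat.le_of_dvd hn ⟨a * b, by rw [← h]; ring⟩
    exact ⟨⟨by omega, by omega, by omega⟩, h⟩

noncomputable def fintypeDTrip (n : ℕ) (hn : 0 < n) : Fintype (DTrip n) := by
  classical
  exact Fintype.subtype (F3 n) (mem_F3 hn)

def eTD (n : ℕ) : Tset n ≃ Σ d : DTrip n, Fin d.1.1 × Fin d.1.1 × Fin d.1.2.1 where
  toFun t := ⟨⟨t.val.1, t.prop.1⟩,
    ⟨t.val.2.1.toNat, by show t.val.2.1.toNat < t.val.1.1; have := t.prop; omega⟩,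
    ⟨t.val.2.2.1.toNat, by show t.val.2.2.1.toNat < t.val.1.1; have := t.prop; omega⟩,
    ⟨t.val.2.2.2.toNat, by show t.val.2.2.2.toNat < t.val.1.2.1; have := t.prop; omega⟩⟩
  invFun s := ⟨⟨s.1.val, (((s.2.1 : ℕ) : ℤ), ((s.2.2.1 : ℕ) : ℤ), ((s.2.2.2 : ℕ) : ℤ))⟩,
    s.1.prop, by positivity, by exact Int.ofNat_lt.mpr s.2.1.isLt, by positivity,
    by exact Int.ofNat_lt.mpr s.2.2.1.isLt, by positivity, by exact Int.ofNat_lt.mpr s.2.2.2.isLt⟩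
  left_inv t := by
    apply Subtype.ext
    have h := t.prop
    refine Prod.ext rfl (Prod.ext ?_ (Prod.ext ?_ ?_)) <;> simp <;> omega
  right_inv s := by
    rcases s with ⟨d, x1, x2, x3⟩
    refine Sigma.ext rfl ?_
    simp [Fin.ext_iff]

lemma sigma1_key (k : ℕ) : ∑ x ∈ k.divisorsAntidiagonal, x.1 * x.1 * x.2 = k * sigma1 k := by
  rw [Nat.sum_divisorsAntidiagonal (fun a b => a * a * b)]
  rw [Finset.sum_congr rfl (fun d hd => ?_), ← Finset.sum_mul, sigma1, mul_comm]
  · exact ((Nat.mem_divisors.mp hd).1).elim (fun e he => by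
      rw [he]; rcases Nat.eq_zero_or_pos d with rfl | hd0
      · simp
      · rw [Nat.mul_div_cancel_left e hd0]; ring)

lemma card_Tset {n : ℕ} (hn : 0 < n) : Nat.card (Tset n) = omegaFn n := by
  haveI : Fintype (DTrip n) := Fintype.subtype (F3 n) (mem_F3 hn)
  rw [Nat.card_congr (eTD n), Nat.card_eq_fintype_card, Fintype.card_sigma]
  have step1 : ∑ d : DTrip n, Fintype.card (Fin d.1.1 × Fin d.1.1 × Fin d.1.2.1)
      = ∑ d : DTrip n, d.1.1 * d.1.1 * d.1.2.1 := by
    apply Finset.sum_congr rfl; intro d _; simp [mul_assoc]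
  rw [step1]
  have step2 : ∑ d : DTrip n, d.1.1 * d.1.1 * d.1.2.1
      = ∑ p ∈ F3 n, p.1 * p.1 * p.2.1 :=
    (Finset.sum_subtype (F3 n) (mem_F3 hn) (fun p => p.1 * p.1 * p.2.1)).symm
  rw [step2]
  have step3 : ∑ p ∈ F3 n, p.1 * p.1 * p.2.1
      = ∑ x ∈ (n.divisorsAntidiagonal).sigma (fun y => y.1.divisorsAntidiagonal),
          x.2.1 * x.2.1 * x.2.2 := by
    refine Finset.sum_nbij' (fun p => ⟨(p.1 * p.2.1, p.2.2), (p.1, p.2.1)⟩)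
      (fun x => (x.2.1, x.2.2, x.1.2)) ?_ ?_ ?_ ?_ ?_
    · intro p hp
      rw [mem_F3 hn] at hp
      rw [Finset.mem_sigma]
      refine ⟨Nat.mem_divisorsAntidiagonal.mpr ⟨hp, hn.ne'⟩,
        Nat.mem_divisorsAntidiagonal.mpr ⟨rfl, fun h0 => ?_⟩⟩
      dsimp only at h0
      rw [h0] at hp; simp at hp; omega
    · intro x hx
      rw [Finset.mem_sigma, Nat.mem_divisorsAntidiagonal, Nat.mem_divisorsAntidiagonal] at hx
      rw [mem_F3 hn]
      rw [hx.2.1, hx.1.1]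
    · intro p hp; rfl
    · rintro ⟨⟨k, c⟩, a, b⟩ hx
      rw [Finset.mem_sigma, Nat.mem_divisorsAntidiagonal, Nat.mem_divisorsAntidiagonal] at hx
      obtain ⟨⟨h1, h2⟩, h3, h4⟩ := hx
      dsimp only at h3 ⊢
      exact Sigma.ext (by rw [h3]) (heq_of_eq rfl)
    · intro p hp; rfl
  rw [step3, Finset.sum_sigma]
  rw [omegaFn, ← Nat.sum_divisorsAntidiagonal (fun k _ => k * sigma1 k)]
  exact Finset.sum_congr rfl (fun y _ => sigma1_key y.1)


/-- classification and count of index-`n` subgroups of `ℤ³`. -/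
theorem stmt15 (n : ℕ) (hn : 0 < n) :
    (∀ Δ : AddSubgroup (ℤ × ℤ × ℤ), Δ.index = n →
      ∃ a b c : ℕ, ∃ μ ν lam : ℤ,
        0 < a ∧ 0 < b ∧ 0 < c ∧ a * b * c = n ∧
        0 ≤ μ ∧ μ < (a : ℤ) ∧ 0 ≤ ν ∧ ν < (a : ℤ) ∧ 0 ≤ lam ∧ lam < (b : ℤ) ∧
        AddSubgroup.closure
          {((a : ℤ), (0 : ℤ), (0 : ℤ)), (μ, (b : ℤ), (0 : ℤ)), (ν, lam, (c : ℤ))} = Δ) ∧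
    (∀ a b c a' b' c' : ℕ, ∀ μ ν lam μ' ν' lam' : ℤ,
      (0 < a ∧ 0 < b ∧ 0 < c ∧ a * b * c = n ∧
        0 ≤ μ ∧ μ < (a : ℤ) ∧ 0 ≤ ν ∧ ν < (a : ℤ) ∧ 0 ≤ lam ∧ lam < (b : ℤ)) →
      (0 < a' ∧ 0 < b' ∧ 0 < c' ∧ a' * b' * c' = n ∧
        0 ≤ μ' ∧ μ' < (a' : ℤ) ∧ 0 ≤ ν' ∧ ν' < (a' : ℤ) ∧ 0 ≤ lam' ∧ lam' < (b' : ℤ)) →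
      AddSubgroup.closure
          {((a : ℤ), (0 : ℤ), (0 : ℤ)), (μ, (b : ℤ), (0 : ℤ)), (ν, lam, (c : ℤ))} =
        AddSubgroup.closure
          {((a' : ℤ), (0 : ℤ), (0 : ℤ)), (μ', (b' : ℤ), (0 : ℤ)), (ν', lam', (c' : ℤ))} →
      a = a' ∧ b = b' ∧ c = c' ∧ μ = μ' ∧ ν = ν' ∧ lam = lam') ∧
    Nat.card {Δ : AddSubgroup (ℤ × ℤ × ℤ) // Δ.index = n} = omegaFn n := by
  refine ⟨fun Δ hΔ => exists_HNF hn Δ hΔ, ?_, ?_⟩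
  · rintro a b c a' b' c' μ ν lam μ' ν' lam'
      ⟨ha, hb, hc, habc, hμ1, hμ2, hν1, hν2, hl1, hl2⟩
      ⟨ha', hb', hc', habc', hμ1', hμ2', hν1', hν2', hl1', hl2'⟩ heq
    rw [closure_eq_HNF ha hb hc, closure_eq_HNF ha' hb' hc'] at heq
    exact HNF_unique ha hb hc ha' hb' hc' hμ1 hμ2 hν1 hν2 hl1 hl2
      hμ1' hμ2' hν1' hν2' hl1' hl2' heq
  · rw [← card_Tset hn]
    refine (Nat.card_congr (Equiv.ofBijective ?_ ⟨?_, ?_⟩)).symm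
    · exact fun t => ⟨HNF t.val.1.1 t.val.1.2.1 t.val.1.2.2 t.val.2.1 t.val.2.2.1 t.val.2.2.2,
        by
          obtain ⟨h0, _⟩ := t.prop
          have hpos : 0 < t.val.1.1 ∧ 0 < t.val.1.2.1 ∧ 0 < t.val.1.2.2 := by
            rcases Nat.eq_zero_or_pos t.val.1.1 with h | h
            · rw [h] at h0; simp at h0; omega
            rcases Nat.eq_zero_or_pos t.val.1.2.1 with h' | h'
            · rw [h'] at h0; simp at h0; omega
            rcases Nat.eq_zero_or_pos t.val.1.2.2 with h'' | h''
            · rw [h''] at h0; simp at h0; omega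
            exact ⟨h, h', h''⟩
          rw [HNF_index hpos.1 hpos.2.1 hpos.2.2]
          exact h0⟩
    · rintro ⟨⟨⟨a, b, c⟩, μ, ν, lam⟩, ha0, hμ1, hμ2, hν1, hν2, hl1, hl2⟩
        ⟨⟨⟨a', b', c'⟩, μ', ν', lam'⟩, ha0', hμ1', hμ2', hν1', hν2', hl1', hl2'⟩ hfeq
      simp only [Subtype.mk.injEq] at hfeq ⊢
      have hpos : 0 < a ∧ 0 < b ∧ 0 < c := by
        constructor
        · rcases Nat.eq_zero_or_pos a with h | h
          · rw [h] at ha0; simp at ha0; omega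
          · exact h
        constructor
        · rcases Nat.eq_zero_or_pos b with h | h
          · rw [h] at ha0; simp at ha0; omega
          · exact h
        · rcases Nat.eq_zero_or_pos c with h | h
          · rw [h] at ha0; simp at ha0; omega
          · exact h
      have hpos' : 0 < a' ∧ 0 < b' ∧ 0 < c' := by
        constructor
        · rcases Nat.eq_zero_or_pos a' with h | h
          · rw [h] at ha0'; simp at ha0'; omega
          · exact h
        constructor
        · rcases Nat.eq_zero_or_pos b' with h | h
          · rw [h] at ha0'; simp at ha0'; omega
          · exact h
        · rcases Nat.eq_zero_or_pos c' with h | h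
          · rw [h] at ha0'; simp at ha0'; omega
          · exact h
      obtain ⟨e1, e2, e3, e4, e5, e6⟩ := HNF_unique hpos.1 hpos.2.1 hpos.2.2
        hpos'.1 hpos'.2.1 hpos'.2.2 hμ1 hμ2 hν1 hν2 hl1 hl2
        hμ1' hμ2' hν1' hν2' hl1' hl2' hfeq
      subst e1; subst e2; subst e3; subst e4; subst e5; subst e6
      rfl
    · rintro ⟨Δ, hΔ⟩
      obtain ⟨a, b, c, μ, ν, lam, ha, hb, hc, habc, hμ1, hμ2, hν1, hν2, hl1, hl2, hcl⟩ :=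
        exists_HNF hn Δ hΔ
      refine ⟨⟨⟨⟨a, b, c⟩, μ, ν, lam⟩, habc, hμ1, hμ2, hν1, hν2, hl1, hl2⟩, ?_⟩
      simp only [Subtype.mk.injEq]
      rw [← hcl, closure_eq_HNF ha hb hc]
end
end
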